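/- arXiv:2201.02438 — 3 statements merged into one kernel-verified Lean document; each statement's English description precedes it below -/
import Mathlib

section
/- In the algebra U, the elements E_{ij} := (1/2){B_i^+, B_j^-} satisfy the gl(n) commutation relations [E_{ij}, E_{kl}] = δ_{jk} E_{il} − δ_{il} E_{kj} for all i, j, k, l ∈ {1,…,n}. -/
open scoped BigOperators

noncomputable section

namespace OspBasis

/-- Commutator. -/
def br {U : Type*} [Ring U] (x y : U) : U := x * y - y * x

/-- Anticommutator. -/
def abr {U : Type*} [Ring U] (x y : U) : U := x * y + y * x

/-- The sign of a generator label: `true` = `+` ↦ 1, `false` = `−` ↦ −1. -/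
def sg : Bool → ℂ := fun b => if b then 1 else -1

/-- Generators `B_j^±` of (the universal enveloping algebra of) `osp(1|2n)` together with
the Ganchev–Palev relations. -/
structure OspData (n : ℕ) (U : Type*) [Ring U] [Algebra ℂ U] where
  B : Bool → Fin n → U
  rel : ∀ (i j l : Fin n) (ξ η ε : Bool),
    br (abr (B ξ i) (B η j)) (B ε l) =
      (sg ε - sg η) • (if j = l then B ξ i else 0) +
      (sg ε - sg ξ) • (if i = l then B η j else 0)

variable {n : ℕ} {U : Type*} [Ring U] [Algebra ℂ U]

/-- `E_{ij} := (1/2){B_i^+, B_j^-}`. -/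
def Eop (d : OspData n U) (i j : Fin n) : U :=
  (2 : ℂ)⁻¹ • abr (d.B true i) (d.B false j)

/-- `h_i := E_{ii} − i + 1` (in 1-indexed notation); with 0-indexing, `h_i = E_{ii} − i`. -/
def hOp (d : OspData n U) (i : Fin n) : U :=
  Eop d i i - (((i : ℕ) : ℂ)) • (1 : U)

/- ### Combinatorics of partitions and tableaux -/

/-- The number of columns of (the Young diagram of) `lam`. -/
def width (lam : Fin n → ℕ) : ℕ := Finset.univ.sup lam

/-- The length of the `l`-th column (0-indexed) of the diagram of `lam`. -/
def colLen (lam : Fin n → ℕ) (l : ℕ) : ℕ :=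
  (Finset.univ.filter (fun k : Fin n => l < lam k)).card

/-- `ℓ(λ)`, the number of nonzero parts. -/
def plen (lam : Fin n → ℕ) : ℕ :=
  (Finset.univ.filter (fun k : Fin n => 0 < lam k)).card

/-- A filling `A : ℕ → ℕ → Fin n` (row, column) is semistandard for the shape `lam`:
rows weakly increase, columns strictly increase (only cells of the diagram matter). -/
def IsSSYT (lam : Fin n → ℕ) (A : ℕ → ℕ → Fin n) : Prop :=
  (∀ (k : Fin n) (l1 l2 : ℕ), l1 ≤ l2 → l2 < lam k → A (k : ℕ) l1 ≤ A (k : ℕ) l2) ∧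
  (∀ (k1 k2 : Fin n) (l : ℕ), k1 < k2 → l < lam k2 → A (k1 : ℕ) l < A (k2 : ℕ) l)

/-- A filling is normalized if it takes the default value `0` outside the diagram of `lam`;
this makes the representation of a tableau by a total function unique. -/
def IsNormalized (hn : 0 < n) (lam : Fin n → ℕ) (A : ℕ → ℕ → Fin n) : Prop :=
  ∀ k l : ℕ, (∀ hk : k < n, lam ⟨k, hk⟩ ≤ l) → A k l = ⟨0, hn⟩

/-- The exponent matrix `γ_A`: `(γ_A)_{ij}` = number of entries equal to `i` in row `j`. -/
def expMat (lam : Fin n → ℕ) (A : ℕ → ℕ → Fin n) : Matrix (Fin n) (Fin n) ℕ :=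
  Matrix.of fun i j => ((Finset.range (lam j)).filter (fun l => A (j : ℕ) l = i)).card

/-- The `j`-th row of `D(γ)` as a list: `γ_{ij}` copies of `i`, in increasing order of `i`. -/
def rowList (γ : Matrix (Fin n) (Fin n) ℕ) (j : Fin n) : List (Fin n) :=
  (List.finRange n).flatMap (fun i => List.replicate (γ i j) i)

/-- The row-weakly-increasing filling `D(γ)` having `γ_{ij}` entries equal to `i` in row `j`. -/
def Dfill (hn : 0 < n) (γ : Matrix (Fin n) (Fin n) ℕ) : ℕ → ℕ → Fin n :=
  fun k l => if hk : k < n then (rowList γ ⟨k, hk⟩).getD l ⟨0, hn⟩ else ⟨0, hn⟩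

/-- The Young subgroup `S_{λ'}` acting on columns. -/
abbrev ColPerm (lam : Fin n → ℕ) :=
  ∀ l : Fin (width lam), Equiv.Perm (Fin (colLen lam (l : ℕ)))

/-- The Young subgroup `S_λ` acting on rows. -/
abbrev RowPerm (lam : Fin n → ℕ) :=
  ∀ k : Fin n, Equiv.Perm (Fin (lam k))

/-- The column-permuted filling `A_σ(k,l) = A(σ_l(k), l)`. -/
def colPermute (lam : Fin n → ℕ) (A : ℕ → ℕ → Fin n) (σ : ColPerm lam) : ℕ → ℕ → Fin n :=
  fun k l =>
    if hl : l < width lam then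
      if hk : k < colLen lam l then A ((σ ⟨l, hl⟩) ⟨k, hk⟩ : ℕ) l else A k l
    else A k l

/-- The row-permuted filling `A^τ(k,l) = A(k, τ_k(l))`. -/
def rowPermute (lam : Fin n → ℕ) (A : ℕ → ℕ → Fin n) (τ : RowPerm lam) : ℕ → ℕ → Fin n :=
  fun k l =>
    if hk : k < n then
      if hl : l < lam ⟨k, hk⟩ then A k ((τ ⟨k, hk⟩) ⟨l, hl⟩ : ℕ) else A k l
    else A k l

/-- `sgn(σ) = sgn(σ_1)⋯sgn(σ_{ℓ(λ')})`. -/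
def sgnC (lam : Fin n → ℕ) (σ : ColPerm lam) : ℂ :=
  ∏ l : Fin (width lam), ((Equiv.Perm.sign (σ l) : ℤ) : ℂ)

/-- `B_A^+`, the column-by-column (left to right), top-to-bottom ordered product of the
creation operators prescribed by the filling `A`. -/
def BAop (d : OspData n U) (lam : Fin n → ℕ) (A : ℕ → ℕ → Fin n) : U :=
  ((List.range (width lam)).map (fun l =>
    ((List.range (colLen lam l)).map (fun k => d.B true (A k l))).prod)).prod

/-- The monomial `E^γ = ∏→_{k=2..n} (E_{k1}^{γ_{k1}} ⋯ E_{k,k−1}^{γ_{k,k−1}})`. -/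
def Epow (d : OspData n U) (γ : Matrix (Fin n) (Fin n) ℕ) : U :=
  ((List.finRange n).map (fun (k : Fin n) =>
    ((List.finRange n).map (fun (j : Fin n) =>
      if (j : ℕ) < (k : ℕ) then (Eop d k j) ^ (γ k j) else 1)).prod)).prod

variable {M : Type*} [AddCommGroup M] [Module ℂ M] [Module U M]

/-- `ω_A := Σ_{σ ∈ S_{λ'}} sgn(σ) B^+_{A_σ} v₀`. -/
def omegaA (d : OspData n U) (lam : Fin n → ℕ) (v0 : M) (A : ℕ → ℕ → Fin n) : M :=
  ∑ σ : ColPerm lam, sgnC lam σ • ((BAop d lam (colPermute lam A σ)) • v0)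

/-- `Ω_A := Σ_{τ ∈ S_λ} ω_{A^τ}`. -/
def OmegaA (d : OspData n U) (lam : Fin n → ℕ) (v0 : M) (A : ℕ → ℕ → Fin n) : M :=
  ∑ τ : RowPerm lam, omegaA d lam v0 (rowPermute lam A τ)

/-- `Ω_λ := Ω_{D(γ_λ)}` where `γ_λ = diag(λ_1,…,λ_n)`. -/
def OmegaLam (d : OspData n U) (hn : 0 < n) (lam : Fin n → ℕ) (v0 : M) : M :=
  OmegaA d lam v0 (Dfill hn (Matrix.diagonal lam))

/- ### Mickelsson–Zhelobenko raising and lowering operators -/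

/-- Ordered product over a finite set of (pairwise commuting) algebra elements. -/
def oprod (S : Finset (Fin n)) (f : Fin n → U) : U :=
  ((S.sort (· ≤ ·)).map f).prod

/-- `E^{e_I} = E_{i_2 i_1} E_{i_3 i_2} ⋯ E_{i_s i_{s−1}}` for `I = (i_1, …, i_s)`. -/
def chainE (d : OspData n U) : List (Fin n) → U
  | a :: b :: rest => Eop d b a * chainE d (b :: rest)
  | _ => 1

/-- `∏_{u} γ_{i_{u+1} i_u}` over consecutive pairs of a list. -/
def chainProd (γ : Matrix (Fin n) (Fin n) ℕ) : List (Fin n) → ℕ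
  | a :: b :: rest => γ b a * chainProd γ (b :: rest)
  | _ => 1

/-- `e_I = Σ_u e_{i_{u+1} i_u}` over consecutive pairs of a list. -/
def eJmat : List (Fin n) → Matrix (Fin n) (Fin n) ℕ
  | a :: b :: rest => Matrix.single b a 1 + eJmat (b :: rest)
  | _ => 0

/-- The increasing sequence `I ∈ 𝓘_{ij}(s)` determined by its set `{i} ∪ {j} ∪ T` of members. -/
def sortIns (i j : Fin n) (T : Finset (Fin n)) : List (Fin n) :=
  Finset.sort (insert i (insert j T)) (· ≤ ·)

/-- The normalized raising operator `z_j^+`. -/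
def zplus (d : OspData n U) (j : Fin n) : U :=
  ∑ i ∈ Finset.Iic j, ∑ T ∈ (Finset.Ioo i j).powerset,
    ((-1 : ℂ) ^ (T.card + (if i = j then 0 else 1))) •
      (chainE d (sortIns i j T) * d.B true i *
        oprod ((Finset.Ioo i j) \ T) (fun l => hOp d l - hOp d j - 1) *
        oprod (Finset.Iio i) (fun l => hOp d l - hOp d j))

/-- The normalized lowering operator `z_j^-`. -/
def zminus (d : OspData n U) (j : Fin n) : U :=
  ∑ i ∈ Finset.Ici j, ∑ T ∈ (Finset.Ioo j i).powerset,
    chainE d (sortIns j i T) * d.B false i *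
      oprod ((Finset.Ioi j) \ (insert i T)) (fun l => hOp d j - hOp d l)

/-- The `gl`-lowering operator `y_{mj}` (for `j < m`). -/
def yop (d : OspData n U) (m j : Fin n) : U :=
  Eop d m j * oprod (Finset.Ioo j m) (fun l => hOp d j - hOp d l)
  + ∑ i ∈ Finset.Ioo j m, ∑ T ∈ (Finset.Ioo j i).powerset,
      chainE d (sortIns j i T) * Eop d m i *
        oprod ((Finset.Ioo j m) \ (insert j (insert i T))) (fun l => hOp d j - hOp d l)

/-- `∏→_{k=2..n} (y_{k1}^{γ_{k1}} ⋯ y_{k,k−1}^{γ_{k,k−1}})`. -/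
def Ypow (d : OspData n U) (γ : Matrix (Fin n) (Fin n) ℕ) : U :=
  ((List.finRange n).map (fun (k : Fin n) =>
    ((List.finRange n).map (fun (j : Fin n) =>
      if (j : ℕ) < (k : ℕ) then (yop d k j) ^ (γ k j) else 1)).prod)).prod

/-- `(z_n^+)^{λ_n} ⋯ (z_1^+)^{λ_1}`. -/
def Zword (d : OspData n U) (lam : Fin n → ℕ) : U :=
  ((List.finRange n).reverse.map (fun j => (zplus d j) ^ (lam j))).prod

/- ### The coefficients `d_i^±(λ)` -/

/-- Extension of `λ` by zero; `lamext lam a = λ_{a+1}` in 1-indexed notation, `λ_{n+1} = 0`. -/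
def lamext (lam : Fin n → ℕ) (a : ℕ) : ℕ := if h : a < n then lam ⟨a, h⟩ else 0

/-- `[m]_2`: 0 if `m` is even, 1 if `m` is odd. -/
def parZ (m : ℤ) : ℕ := m.natAbs % 2

/-- The coefficient `d_i^+(λ)`. -/
def dplus (lam : Fin n → ℕ) (i : Fin n) : ℂ :=
  ((-1 : ℂ)) ^ (∑ a ∈ Finset.Ico (i : ℕ) n,
      (a + 2) * ((lamext lam a - lamext lam (a + 1)) + (if a = (i : ℕ) then 1 else 0)))
    / (((lam i : ℂ) + 1) * (((i : ℕ) : ℂ) + 1))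
    * ∏ l ∈ Finset.Iio i,
        (((lam i : ℂ) - (lam l : ℂ) - ((i : ℕ) : ℂ) + ((l : ℕ) : ℂ) + 1) /
         ((lam i : ℂ) - (lam l : ℂ) - ((i : ℕ) : ℂ) + ((l : ℕ) : ℂ) +
           (parZ ((lam i : ℤ) - (lam l : ℤ)) : ℂ)))

/-- The coefficient `d_i^-(λ)`. -/
def dminus (p : ℕ) (lam : Fin n → ℕ) (i : Fin n) : ℂ :=
  ((-1 : ℂ)) ^ (∑ a ∈ Finset.Ico (i : ℕ) n, (a + 2) * (lamext lam a - lamext lam (a + 1)))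
    * ((lam i : ℂ) + 1) * (((i : ℕ) : ℂ) + 1)
    * ((lam i : ℂ) + (n : ℂ) - (((i : ℕ) : ℂ) + 1) + (parZ (lam i : ℤ) : ℂ) * ((p : ℂ) - (n : ℂ)))
    * ∏ l ∈ Finset.Ioi i,
        (((lam i : ℂ) - (lam l : ℂ) - ((i : ℕ) : ℂ) + ((l : ℕ) : ℂ) - 1) /
         ((lam i : ℂ) - (lam l : ℂ) - ((i : ℕ) : ℂ) + ((l : ℕ) : ℂ) -
           (parZ ((lam i : ℤ) - (lam l : ℤ)) : ℂ)))

/-- The index set of semistandard Young tableaux with at most `p` rows (shape bundled),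
in normalized total-function representation. -/
def SSYTp (hn : 0 < n) (p : ℕ) :=
  {x : (Fin n → ℕ) × (ℕ → ℕ → Fin n) //
    Antitone x.1 ∧ plen x.1 ≤ p ∧ IsSSYT x.1 x.2 ∧ IsNormalized hn x.1 x.2}

end OspBasis

open OspBasis

section Aux
variable {n : ℕ} {U : Type*} [Ring U] [Algebra ℂ U]

lemma br_smul_left (c : ℂ) (x y : U) : br (c • x) y = c • br x y := by
  simp [br, smul_sub, smul_mul_assoc, mul_smul_comm]

lemma br_smul_right (c : ℂ) (x y : U) : br x (c • y) = c • br x y := by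
  simp [br, smul_sub, smul_mul_assoc, mul_smul_comm]

lemma br_abr_right (a x y : U) : br a (abr x y) = abr (br a x) y + abr x (br a y) := by
  simp only [br, abr]
  noncomm_ring

lemma comm_E_Bp (d : OspData n U) (i j k : Fin n) :
    br (Eop d i j) (d.B true k) = if j = k then d.B true i else 0 := by
  rw [Eop, br_smul_left, d.rel i j k true false true]
  simp [sg, smul_smul, smul_add]
  norm_num

lemma comm_E_Bm (d : OspData n U) (i j k : Fin n) :
    br (Eop d i j) (d.B false k) = -(if i = k then d.B false j else 0) := by
  rw [Eop, br_smul_left, d.rel i j k true false false]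
  simp [sg, smul_smul, smul_add]
  norm_num
  split <;> simp

end Aux

theorem stmt0 {n : ℕ} (hn : 0 < n) {U : Type*} [Ring U] [Algebra ℂ U] (d : OspData n U)
    (i j k l : Fin n) :
    br (Eop d i j) (Eop d k l) =
      (if j = k then Eop d i l else 0) - (if i = l then Eop d k j else 0) := by
  conv_lhs => rw [show Eop d k l = (2 : ℂ)⁻¹ • abr (d.B true k) (d.B false l) from rfl]
  rw [br_smul_right, br_abr_right, comm_E_Bp, comm_E_Bm]
  by_cases hjk : j = k <;> by_cases hil : i = l <;>
    simp [hjk, hil, Eop, abr, smul_add, smul_sub, sub_eq_add_neg] <;> abel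
end
end

section
/- Let λ ∈ ℙ and let γ ∈ M_n(ℕ) have column sums λ. Then the filling D(γ) is a semistandard Young tableau (D(γ) ∈ Y(λ)) if and only if γ is lower triangular (γ_{ki} = 0 for k < i) and Σ_{k=i}^{j} γ_{ki} ≥ Σ_{k=i+1}^{j+1} γ_{k,i+1} for all 1 ≤ i ≤ j ≤ n−1. -/
open scoped BigOperators

noncomputable section

open OspBasis

section AuxStmt9

variable {n : ℕ}

/-- Number of entries `≤ m` in row `r` of `D(γ)`. -/
def cntAux (γ : Matrix (Fin n) (Fin n) ℕ) (r : Fin n) (m : ℕ) : ℕ :=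
  ∑ k ∈ Finset.univ.filter (fun k : Fin n => (k : ℕ) ≤ m), γ k r

lemma length_rowList (γ : Matrix (Fin n) (Fin n) ℕ) (j : Fin n) :
    (rowList γ j).length = ∑ i, γ i j := by
  simp [rowList, List.length_flatMap, Fin.sum_univ_def, Function.comp_def]

lemma sum_map_filter {α : Type*} (p : α → Bool) (f : α → ℕ) :
    ∀ L : List α, ((L.filter p).map f).sum = (L.map fun i => if p i then f i else 0).sum := by
  intro L
  induction L with
  | nil => simp
  | cons a L ih => by_cases h : p a <;> simp [h, ih]

lemma split_aux (γ : Fin n → ℕ) (m : ℕ) :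
    ∀ L : List (Fin n), L.Pairwise (· ≤ ·) →
      ∃ A B : List (Fin n),
        (L.flatMap fun i => List.replicate (γ i) i) = A ++ B ∧
        (∀ x ∈ A, (x : ℕ) ≤ m) ∧ (∀ x ∈ B, m < (x : ℕ)) ∧
        A.length = ((List.filter (fun i : Fin n => decide ((i : ℕ) ≤ m)) L).map γ).sum := by
  intro L
  induction L with
  | nil => exact fun _ => ⟨[], [], by simp, by simp, by simp, by simp⟩
  | cons a L ih =>
    intro hs
    by_cases ha : (a : ℕ) ≤ m
    · obtain ⟨A, B, hAB, hA, hB, hlen⟩ := ih hs.of_cons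
      refine ⟨List.replicate (γ a) a ++ A, B, by simp [hAB], ?_, hB, ?_⟩
      · intro x hx
        rcases List.mem_append.1 hx with h | h
        · rw [List.eq_of_mem_replicate h]; exact ha
        · exact hA x h
      · simp [ha, hlen]
    · refine ⟨[], (a :: L).flatMap fun i => List.replicate (γ i) i, by simp, by simp, ?_, ?_⟩
      · intro x hx
        rw [List.mem_flatMap] at hx
        obtain ⟨i, hi, hxi⟩ := hx
        rw [List.eq_of_mem_replicate hxi]
        rcases List.mem_cons.1 hi with rfl | hi
        · omega
        · have := List.rel_of_pairwise_cons hs hi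
          have : (a : ℕ) ≤ (i : ℕ) := this
          omega
      · have hfil : (List.filter (fun i : Fin n => decide ((i : ℕ) ≤ m)) (a :: L)) = [] := by
          rw [List.filter_eq_nil_iff]
          intro x hx
          rcases List.mem_cons.1 hx with rfl | hx
          · simpa using ha
          · have := List.rel_of_pairwise_cons hs hx
            have h2 : (a : ℕ) ≤ (x : ℕ) := this
            simp only [decide_eq_true_eq]
            omega
        simp [hfil]

lemma cnt_eq (γ : Matrix (Fin n) (Fin n) ℕ) (r : Fin n) (m : ℕ) :
    ((List.filter (fun i : Fin n => decide ((i : ℕ) ≤ m)) (List.finRange n)).map (fun i => γ i r)).sum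
      = cntAux γ r m := by
  rw [sum_map_filter, cntAux, Finset.sum_filter, Fin.sum_univ_def]
  simp

lemma Dfill_coe (hn : 0 < n) (γ : Matrix (Fin n) (Fin n) ℕ) (k : Fin n) (l : ℕ) :
    Dfill hn γ (k : ℕ) l = (rowList γ k).getD l ⟨0, hn⟩ := by
  simp [Dfill]

lemma master (hn : 0 < n) (γ : Matrix (Fin n) (Fin n) ℕ) (r : Fin n) (l m : ℕ)
    (hl : l < ∑ i, γ i r) :
    ((Dfill hn γ (r : ℕ) l : Fin n) : ℕ) ≤ m ↔ l < cntAux γ r m := by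
  obtain ⟨A, B, hAB, hA, hB, hlen⟩ :=
    split_aux (fun i => γ i r) m (List.finRange n) (List.pairwise_le_finRange n)
  have hrow : rowList γ r = A ++ B := hAB
  have hlenA : A.length = cntAux γ r m := by rw [hlen, cnt_eq]
  have hfl : l < (rowList γ r).length := by rw [length_rowList]; exact hl
  have hget : Dfill hn γ (r : ℕ) l = (rowList γ r)[l]'hfl := by
    rw [Dfill_coe, List.getD_eq_getElem _ _ hfl]
  by_cases hc : l < A.length
  · have he : (rowList γ r)[l]'hfl = A[l]'hc := by
      simp only [hrow]
      exact List.getElem_append_left hc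
    constructor
    · intro _; rw [← hlenA]; exact hc
    · intro _; rw [hget, he]; exact hA _ (List.getElem_mem hc)
  · have hlt : l - A.length < B.length := by
      have h2 := hfl
      rw [hrow, List.length_append] at h2
      omega
    have he : (rowList γ r)[l]'hfl = B[l - A.length]'hlt := by
      simp only [hrow]
      exact List.getElem_append_right (by omega)
    constructor
    · intro h
      exfalso
      rw [hget, he] at h
      exact absurd h (not_le.2 (hB _ (List.getElem_mem hlt)))
    · intro h
      exfalso
      rw [hlenA] at hc
      exact hc h

lemma mem_rowList (γ : Matrix (Fin n) (Fin n) ℕ) (k j : Fin n) (h : γ k j ≠ 0) :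
    k ∈ rowList γ j := by
  rw [rowList, List.mem_flatMap]
  exact ⟨k, List.mem_finRange k, List.mem_replicate.2 ⟨h, rfl⟩⟩

lemma sum_Icc_eq_cnt (γ : Matrix (Fin n) (Fin n) ℕ)
    (htri : ∀ k i : Fin n, k < i → γ k i = 0)
    (i j : ℕ) (hi : i < n) (_hij : i ≤ j) :
    ∑ k ∈ Finset.univ.filter (fun k : Fin n => i ≤ (k : ℕ) ∧ (k : ℕ) ≤ j), γ k ⟨i, hi⟩
      = cntAux γ ⟨i, hi⟩ j := by
  rw [cntAux]
  apply Finset.sum_subset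
  · intro k hk
    simp only [Finset.mem_filter, Finset.mem_univ, true_and] at hk ⊢
    exact hk.2
  · intro k hk hk'
    simp only [Finset.mem_filter, Finset.mem_univ, true_and, not_and, not_le] at hk hk'
    refine htri k ⟨i, hi⟩ ?_
    rw [Fin.lt_def]
    simp only [Fin.val_mk]
    by_contra h
    exact absurd hk (not_le.2 (hk' (by omega)))

lemma cnt_le_total (γ : Matrix (Fin n) (Fin n) ℕ) (r : Fin n) (m : ℕ) :
    cntAux γ r m ≤ ∑ i, γ i r :=
  Finset.sum_le_sum_of_subset (Finset.filter_subset _ _)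

lemma cnt_zero (γ : Matrix (Fin n) (Fin n) ℕ)
    (htri : ∀ k i : Fin n, k < i → γ k i = 0) (r : Fin n) (m : ℕ) (h : m < (r : ℕ)) :
    cntAux γ r m = 0 := by
  apply Finset.sum_eq_zero
  intro k hk
  simp only [Finset.mem_filter, Finset.mem_univ, true_and] at hk
  exact htri k r (by rw [Fin.lt_def]; omega)

end AuxStmt9

theorem stmt9 {n : ℕ} (hn : 0 < n) (lam : Fin n → ℕ) (hlam : Antitone lam)
    (γ : Matrix (Fin n) (Fin n) ℕ) (hsum : ∀ j, lam j = ∑ i, γ i j) :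
    IsSSYT lam (Dfill hn γ) ↔
      ((∀ k i : Fin n, k < i → γ k i = 0) ∧
       ∀ (i j : ℕ) (hij : i ≤ j) (hj : j + 1 < n),
         ∑ k ∈ Finset.univ.filter (fun k : Fin n => i + 1 ≤ (k : ℕ) ∧ (k : ℕ) ≤ j + 1),
             γ k ⟨i + 1, by omega⟩
           ≤ ∑ k ∈ Finset.univ.filter (fun k : Fin n => i ≤ (k : ℕ) ∧ (k : ℕ) ≤ j),
             γ k ⟨i, by omega⟩) := by
  constructor
  · rintro ⟨hrow, hcol⟩
    have chain : ∀ (m : ℕ) (hm : m < n) (l : ℕ), l < lam ⟨m, hm⟩ →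
        m ≤ ((Dfill hn γ m l : Fin n) : ℕ) := by
      intro m
      induction m with
      | zero => exact fun _ _ _ => Nat.zero_le _
      | succ r ih =>
        intro hm l hl
        have hr : r < n := by omega
        have h1 : l < lam ⟨r, hr⟩ :=
          lt_of_lt_of_le hl (hlam (by rw [Fin.mk_le_mk]; omega))
        have h2 : Dfill hn γ r l < Dfill hn γ (r + 1) l :=
          hcol ⟨r, hr⟩ ⟨r + 1, hm⟩ l (by rw [Fin.mk_lt_mk]; omega) hl
        have h3 := ih hr l h1
        rw [Fin.lt_def] at h2
        omega
    have htri : ∀ k i : Fin n, k < i → γ k i = 0 := by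
      intro k i hki
      by_contra hne
      obtain ⟨l, hlt, hget⟩ := List.mem_iff_getElem.mp (mem_rowList γ k i hne)
      have hll : l < lam i := by
        rw [length_rowList] at hlt
        rw [hsum]; exact hlt
      have hch := chain (i : ℕ) i.isLt l (by simpa using hll)
      have hD : Dfill hn γ (i : ℕ) l = k := by
        rw [Dfill_coe, List.getD_eq_getElem _ _ hlt, hget]
      rw [hD] at hch
      rw [Fin.lt_def] at hki
      omega
    refine ⟨htri, ?_⟩
    intro i j hij hj
    have hi : i < n := by omega
    have hi1 : i + 1 < n := by omega
    rw [sum_Icc_eq_cnt γ htri (i + 1) (j + 1) hi1 (by omega),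
      sum_Icc_eq_cnt γ htri i j hi hij]
    rcases Nat.eq_zero_or_pos (cntAux γ ⟨i + 1, hi1⟩ (j + 1)) with h0 | hpos
    · omega
    · set c := cntAux γ ⟨i + 1, hi1⟩ (j + 1) with hc
      set l := c - 1 with hldef
      have hlc : l < c := by omega
      have hclam : c ≤ ∑ k, γ k ⟨i + 1, hi1⟩ := cnt_le_total γ _ _
      have hlsum : l < ∑ k, γ k ⟨i + 1, hi1⟩ := by omega
      have hl1 : l < lam ⟨i + 1, hi1⟩ := by rw [hsum]; exact hlsum
      have hDi1 : ((Dfill hn γ (i + 1) l : Fin n) : ℕ) ≤ j + 1 :=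
        (master hn γ ⟨i + 1, hi1⟩ l (j + 1) hlsum).mpr hlc
      have hcol' : Dfill hn γ i l < Dfill hn γ (i + 1) l :=
        hcol ⟨i, hi⟩ ⟨i + 1, hi1⟩ l (by rw [Fin.mk_lt_mk]; omega) hl1
      rw [Fin.lt_def] at hcol'
      have hl0 : l < lam ⟨i, hi⟩ :=
        lt_of_lt_of_le hl1 (hlam (by rw [Fin.mk_le_mk]; omega))
      have hlsum0 : l < ∑ k, γ k ⟨i, hi⟩ := by rw [← hsum]; exact hl0
      have hfin : l < cntAux γ ⟨i, hi⟩ j := by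
        refine (master hn γ ⟨i, hi⟩ l j hlsum0).mp ?_
        show ((Dfill hn γ i l : Fin n) : ℕ) ≤ j
        omega
      omega
  · rintro ⟨htri, hineq⟩
    have hineq' : ∀ (r m : ℕ) (hr : r + 1 < n), r + 1 ≤ m → m < n →
        cntAux γ ⟨r + 1, hr⟩ m ≤ cntAux γ ⟨r, by omega⟩ (m - 1) := by
      intro r m hr hrm hmn
      have h2 := hineq r (m - 1) (by omega) (by omega)
      rw [sum_Icc_eq_cnt γ htri (r + 1) (m - 1 + 1) hr (by omega),
        sum_Icc_eq_cnt γ htri r (m - 1) (by omega) (by omega)] at h2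
      have e : m - 1 + 1 = m := by omega
      simp only [e] at h2
      exact h2
    have cons : ∀ (r : ℕ) (hr : r + 1 < n) (l : ℕ), l < lam ⟨r + 1, hr⟩ →
        Dfill hn γ r l < Dfill hn γ (r + 1) l := by
      intro r hr l hl
      have hr0 : r < n := by omega
      have hlsum : l < ∑ i, γ i ⟨r + 1, hr⟩ := by rw [← hsum]; exact hl
      set m2 := ((Dfill hn γ (r + 1) l : Fin n) : ℕ) with hm2
      have hm2n : m2 < n := (Dfill hn γ (r + 1) l).isLt
      have hge : r + 1 ≤ m2 := by
        by_contra h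
        have hmm := (master hn γ ⟨r + 1, hr⟩ l m2 hlsum).mp le_rfl
        rw [cnt_zero γ htri ⟨r + 1, hr⟩ m2 (by simp only [Fin.val_mk]; omega)] at hmm
        omega
      have h1 : l < cntAux γ ⟨r + 1, hr⟩ m2 :=
        (master hn γ ⟨r + 1, hr⟩ l m2 hlsum).mp le_rfl
      have h2 := hineq' r m2 hr hge hm2n
      have h3 : l < cntAux γ ⟨r, hr0⟩ (m2 - 1) := by
        calc l < cntAux γ ⟨r + 1, hr⟩ m2 := h1
        _ ≤ _ := h2
      have hl0 : l < lam ⟨r, hr0⟩ :=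
        lt_of_lt_of_le hl (hlam (by rw [Fin.mk_le_mk]; omega))
      have hlsum0 : l < ∑ i, γ i ⟨r, hr0⟩ := by rw [← hsum]; exact hl0
      have h4 : ((Dfill hn γ r l : Fin n) : ℕ) ≤ m2 - 1 :=
        (master hn γ ⟨r, hr0⟩ l (m2 - 1) hlsum0).mpr h3
      rw [Fin.lt_def]
      omega
    constructor
    · intro k l1 l2 h12 h2
      have hl2 : l2 < ∑ i, γ i k := by rw [← hsum]; exact h2
      have hl1 : l1 < ∑ i, γ i k := by omega
      have hm := (master hn γ k l2 ((Dfill hn γ (k : ℕ) l2 : Fin n) : ℕ) hl2).mp le_rfl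
      have hres := (master hn γ k l1 ((Dfill hn γ (k : ℕ) l2 : Fin n) : ℕ) hl1).mpr
        (lt_of_le_of_lt h12 hm)
      exact Fin.le_def.mpr hres
    · intro k1 k2 l hk hL
      have main : ∀ (b : ℕ) (hb : b < n) (a : ℕ), a < b → l < lam ⟨b, hb⟩ →
          Dfill hn γ a l < Dfill hn γ b l := by
        intro b
        induction b with
        | zero => omega
        | succ r ih =>
          intro hb a ha hl
          rcases Nat.lt_or_ge a r with h | h
          · have hr : r < n := by omega
            have hl' : l < lam ⟨r, hr⟩ :=
              lt_of_lt_of_le hl (hlam (by rw [Fin.mk_le_mk]; omega))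
            exact lt_trans (ih hr a h hl') (cons r hb l hl)
          · have : a = r := by omega
            subst this
            exact cons a hb l hl
      have := main (k2 : ℕ) k2.isLt (k1 : ℕ) (Fin.lt_def.mp hk) (by simpa using hL)
      exact this
end
end

section
/- Let ℓ ∈ {1,…,n}, γ ∈ M_n(ℕ) and λ ∈ ℙ with ℓ(λ) ≤ p. Then in L(p): B_ℓ^+ E^γ Ω_λ = Σ_{j=ℓ}^{n} Σ_{t=1}^{j−ℓ+1} Σ_{J∈𝓘_{ℓj}(t)} (−1)^{t−1} (∏_{u=1}^{t−1} γ_{j_{u+1} j_u}) E^{γ−e_J} B_j^+ Ω_λ, and B_ℓ^- E^γ Ω_λ = Σ_{j=1}^{ℓ} γ_{ℓj}^{1−δ_{ℓj}} E^{γ−e_{ℓj}} B_j^- Ω_λ (where γ_{ℓj}^{0} := 1, and any term whose scalar coefficient contains a factor γ_{ab} = 0 is zero, so that only matrices with nonnegative strictly-lower-triangular entries occur in E^{γ−e_J}). -/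
open scoped BigOperators

noncomputable section

namespace OspBasis

variable {n : ℕ} {U : Type*} [Ring U] [Algebra ℂ U]

variable {M : Type*} [AddCommGroup M] [Module ℂ M] [Module U M]

/- ### Auxiliary lemmas -/

section AuxList

variable {n : ℕ}

/-- `(c,e)` is a consecutive pair of `l`: `e` immediately precedes `c`. -/
def memPairs (c e : Fin n) : List (Fin n) → Prop
  | x :: y :: r => (y = c ∧ x = e) ∨ memPairs c e (y :: r)
  | _ => False

lemma stdB_apply (i j k l : Fin n) :
    Matrix.single i j (1:ℕ) k l = if i = k ∧ j = l then 1 else 0 := rfl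

lemma memPairs_mem_left {c e : Fin n} :
    ∀ {l : List (Fin n)}, memPairs c e l → c ∈ l
  | x :: y :: r, h => by
    rcases h with ⟨h1, _⟩ | h
    · subst h1; exact List.mem_cons_of_mem _ (List.mem_cons_self)
    · exact List.mem_cons_of_mem _ (memPairs_mem_left h)
  | [], h => h.elim
  | [x], h => h.elim

lemma memPairs_lt {c e : Fin n} :
    ∀ {l : List (Fin n)}, List.Pairwise (· < ·) l → memPairs c e l → e < c
  | x :: y :: r, hs, h => by
    rcases h with ⟨h1, h2⟩ | h
    · subst h1; subst h2; exact (List.pairwise_cons.1 hs).1 _ (List.mem_cons_self)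
    · exact memPairs_lt (List.pairwise_cons.1 hs).2 h
  | [], _, h => h.elim
  | [x], _, h => h.elim

lemma chainProd_congr (γ₁ γ₂ : Matrix (Fin n) (Fin n) ℕ) :
    ∀ l : List (Fin n), (∀ c e, memPairs c e l → γ₁ c e = γ₂ c e) →
      chainProd γ₁ l = chainProd γ₂ l
  | [] , _ => rfl
  | [x], _ => rfl
  | x :: y :: r, h => by
    show γ₁ y x * chainProd γ₁ (y :: r) = γ₂ y x * chainProd γ₂ (y :: r)
    rw [h y x (Or.inl ⟨rfl, rfl⟩),
      chainProd_congr γ₁ γ₂ (y :: r) (fun c e hc => h c e (Or.inr hc))]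

lemma chainProd_eq_zero {γ : Matrix (Fin n) (Fin n) ℕ} {c e : Fin n} :
    ∀ {l : List (Fin n)}, memPairs c e l → γ c e = 0 → chainProd γ l = 0
  | x :: y :: r, h, hγ => by
    show γ y x * chainProd γ (y :: r) = 0
    rcases h with ⟨h1, h2⟩ | h
    · subst h1; subst h2; rw [hγ, zero_mul]
    · rw [chainProd_eq_zero h hγ, mul_zero]
  | [], h, _ => h.elim
  | [x], h, _ => h.elim

lemma eJmat_apply_of_not_memPairs {c e : Fin n} :
    ∀ {l : List (Fin n)}, ¬ memPairs c e l → eJmat l c e = 0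
  | x :: y :: r, h => by
    have h1 : ¬ (y = c ∧ x = e) := fun hh => h (Or.inl hh)
    have h2 : ¬ memPairs c e (y :: r) := fun hh => h (Or.inr hh)
    show (Matrix.single y x (1:ℕ) + eJmat (y :: r)) c e = 0
    rw [Matrix.add_apply, stdB_apply, if_neg h1, eJmat_apply_of_not_memPairs h2]
  | [], _ => rfl
  | [x], _ => rfl

lemma exists_succ_pair {c e : Fin n} :
    ∀ {l : List (Fin n)} (h : l ≠ []), memPairs c e l → c ≠ l.getLast h →
      ∃ c', memPairs c' c l
  | [x], h, hm, _ => hm.elim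
  | [x, y], _, hm, hlast => by
    rcases hm with ⟨h1, _⟩ | hm
    · exact absurd (by simp [← h1]) hlast
    · exact hm.elim
  | x :: y :: z :: r, h, hm, hlast => by
    rcases hm with ⟨h1, _⟩ | hm
    · exact ⟨z, Or.inr (Or.inl ⟨rfl, h1⟩)⟩
    · have : c ≠ (y :: z :: r).getLast (by simp) := by
        simpa [List.getLast_cons] using hlast
      obtain ⟨c', hc'⟩ := exists_succ_pair (by simp) hm this
      exact ⟨c', Or.inr hc'⟩

lemma memPairs_append_last {c e a : Fin n} :
    ∀ {l : List (Fin n)} (h : l ≠ []),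
      memPairs c e (l ++ [a]) ↔ ((c = a ∧ e = l.getLast h) ∨ memPairs c e l)
  | [x], _ => by
    show (a = c ∧ x = e) ∨ memPairs c e [a] ↔ _
    constructor
    · rintro (⟨h1, h2⟩ | h) ; exact Or.inl ⟨h1.symm, h2.symm⟩; exact h.elim
    · rintro (⟨h1, h2⟩ | h) ; exact Or.inl ⟨h1.symm, h2.symm⟩; exact h.elim
  | x :: y :: r, _ => by
    show (y = c ∧ x = e) ∨ memPairs c e ((y :: r) ++ [a]) ↔ _
    rw [memPairs_append_last (l := y :: r) (by simp)]
    constructor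
    · rintro (h | h | h)
      · exact Or.inr (Or.inl h)
      · exact Or.inl (by simpa [List.getLast_cons] using h)
      · exact Or.inr (Or.inr h)
    · rintro (h | h | h)
      · exact Or.inr (Or.inl (by simpa [List.getLast_cons] using h))
      · exact Or.inl h
      · exact Or.inr (Or.inr h)

lemma chainProd_append (γ : Matrix (Fin n) (Fin n) ℕ) (a : Fin n) :
    ∀ (l : List (Fin n)) (h : l ≠ []),
      chainProd γ (l ++ [a]) = chainProd γ l * γ a (l.getLast h)
  | [x], _ => by
    show γ a x * chainProd γ [a] = chainProd γ [x] * γ a x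
    show γ a x * 1 = 1 * γ a x
    rw [one_mul, mul_one]
  | x :: y :: r, _ => by
    show γ y x * chainProd γ ((y :: r) ++ [a]) = γ y x * chainProd γ (y :: r) * γ a _
    have hl : (x :: y :: r).getLast (by simp) = (y :: r).getLast (by simp) := by
      simp [List.getLast_cons]
    rw [hl, chainProd_append γ a (y :: r) (by simp), mul_assoc]

lemma eJmat_append (a : Fin n) :
    ∀ (l : List (Fin n)) (h : l ≠ []),
      eJmat (l ++ [a]) = Matrix.single a (l.getLast h) (1:ℕ) + eJmat l
  | [x], _ => by
    show Matrix.single a x (1:ℕ) + eJmat [a] = _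
    show Matrix.single a x (1:ℕ) + 0 = Matrix.single a x (1:ℕ) + 0
    rfl
  | x :: y :: r, _ => by
    show Matrix.single y x (1:ℕ) + eJmat ((y :: r) ++ [a]) = _
    rw [eJmat_append a (y :: r) (by simp)]
    show _ = Matrix.single a ((x :: y :: r).getLast (by simp)) (1:ℕ) +
      (Matrix.single y x (1:ℕ) + eJmat (y :: r))
    have : (x :: y :: r).getLast (by simp) = (y :: r).getLast (by simp) := by
      simp [List.getLast_cons]
    rw [this]
    abel

lemma sorted_le_getLast {x : Fin n} :
    ∀ {l : List (Fin n)} (h : l ≠ []), List.Pairwise (· ≤ ·) l → x ∈ l → x ≤ l.getLast h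
  | [y], _, _, hx => by simp_all
  | y :: z :: r, _, hs, hx => by
    have h2 : (y :: z :: r).getLast (by simp) = (z :: r).getLast (by simp) := by
      simp [List.getLast_cons]
    rw [h2]
    rcases List.mem_cons.1 hx with h | h
    · subst h
      exact le_trans ((List.pairwise_cons.1 hs).1 z (List.mem_cons_self))
        (sorted_le_getLast (by simp) (List.pairwise_cons.1 hs).2 (List.mem_cons_self))
    · exact sorted_le_getLast (by simp) (List.pairwise_cons.1 hs).2 h

end AuxList
section AuxSort

variable {n : ℕ}

lemma sort_insert_max {a : Fin n} {S : Finset (Fin n)} (h : ∀ x ∈ S, x < a) :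
    (insert a S).sort (· ≤ ·) = S.sort (· ≤ ·) ++ [a] := by
  have ha : a ∉ S := fun hx => lt_irrefl a (h a hx)
  refine (fun hp hs => List.Perm.eq_of_pairwise' (Finset.pairwise_sort _ _) hs hp) ?_ ?_
  · exact ((Finset.sort_perm_toList _ _).trans ((Finset.toList_insert ha).trans
      ((List.Perm.cons a (Finset.sort_perm_toList _ _).symm).trans
        (List.perm_append_singleton _ _).symm)))
  · rw [List.pairwise_append]
    refine ⟨Finset.pairwise_sort _ _, List.pairwise_singleton _ _, ?_⟩
    intro x hx y hy
    rw [List.mem_singleton] at hy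
    subst hy
    exact le_of_lt (h x ((Finset.mem_sort _).1 hx))

lemma mem_sortIns {x i j : Fin n} {T : Finset (Fin n)} :
    x ∈ sortIns i j T ↔ x = i ∨ x = j ∨ x ∈ T := by
  simp [sortIns, Finset.mem_sort]

lemma sortIns_sorted (i j : Fin n) (T : Finset (Fin n)) :
    List.Pairwise (· < ·) (sortIns i j T) := (Finset.sortedLT_sort _).pairwise

lemma sortIns_ne_nil (i j : Fin n) (T : Finset (Fin n)) : sortIns i j T ≠ [] :=
  List.ne_nil_of_mem (mem_sortIns.2 (Or.inl rfl))

lemma sortIns_self (l : Fin n) : sortIns l l (∅ : Finset (Fin n)) = [l] := by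
  simp [sortIns]

lemma sortIns_append_gen {i j : Fin n} (hij : i < j) (T : Finset (Fin n))
    (hT : ∀ x ∈ T, x < j) :
    sortIns i j T = (insert i T).sort (· ≤ ·) ++ [j] := by
  unfold sortIns
  rw [Finset.insert_comm]
  refine sort_insert_max ?_
  intro x hx
  rcases Finset.mem_insert.1 hx with h | h
  · exact h ▸ hij
  · exact hT x h

lemma sortIns_two {i a : Fin n} (h : i < a) : sortIns i a (∅ : Finset (Fin n)) = [i, a] := by
  rw [sortIns_append_gen h ∅ (by simp)]
  simp

lemma getLast_eq_of_eq {α : Type*} {l₁ l₂ : List α} (h : l₁ = l₂) {h1 : l₁ ≠ []} :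
    l₁.getLast h1 = l₂.getLast (h ▸ h1) := by subst h; rfl

lemma getLast_sortIns {i j : Fin n} (hij : i ≤ j) {T : Finset (Fin n)}
    (hT : T ⊆ Finset.Ioo i j) (h : sortIns i j T ≠ []) :
    (sortIns i j T).getLast h = j := by
  rcases eq_or_lt_of_le hij with heq | hlt
  · subst heq
    have hTe : T = ∅ := by
      rw [Finset.eq_empty_iff_forall_notMem]
      intro x hx
      have := Finset.mem_Ioo.1 (hT hx)
      exact absurd (this.1.trans this.2) (lt_irrefl _)
    subst hTe
    simp [sortIns_self]
  · have hd := sortIns_append_gen hlt T (fun x hx => (Finset.mem_Ioo.1 (hT hx)).2)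
    rw [getLast_eq_of_eq hd]
    exact List.getLast_append_singleton _

lemma sortIns_decomp {l b a : Fin n} (hlb : l < b) (hba : b < a) {T' : Finset (Fin n)}
    (hT' : T' ⊆ Finset.Ioo l b) :
    sortIns l a (insert b T') = sortIns l b T' ++ [a] := by
  rw [sortIns_append_gen (hlb.trans hba) (insert b T')
    (fun x hx => by
      rcases Finset.mem_insert.1 hx with h | h
      · exact h ▸ hba
      · exact ((Finset.mem_Ioo.1 (hT' h)).2).trans hba),
    sortIns_append_gen hlb T' (fun x hx => (Finset.mem_Ioo.1 (hT' hx)).2)]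
  congr 1
  rw [Finset.insert_comm]
  exact sort_insert_max (fun x hx => by
    rcases Finset.mem_insert.1 hx with h | h
    · exact h ▸ hlb
    · exact (Finset.mem_Ioo.1 (hT' h)).2)

lemma exists_pair_sortIns {l j : Fin n} (h : l < j) {T : Finset (Fin n)}
    (hT : T ⊆ Finset.Ioo l j) :
    ∃ e, memPairs j e (sortIns l j T) ∧ e < j := by
  have hd := sortIns_append_gen h T (fun x hx => (Finset.mem_Ioo.1 (hT hx)).2)
  set L := (insert l T).sort (· ≤ ·) with hL
  have hLne : L ≠ [] := List.ne_nil_of_mem ((Finset.mem_sort _).2 (Finset.mem_insert_self l T))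
  refine ⟨L.getLast hLne, ?_, ?_⟩
  · rw [hd]
    exact (memPairs_append_last hLne).2 (Or.inl ⟨rfl, rfl⟩)
  · have : L.getLast hLne ∈ L := List.getLast_mem hLne
    rcases Finset.mem_insert.1 ((Finset.mem_sort _).1 this) with hh | hh
    · exact hh ▸ h
    · exact (Finset.mem_Ioo.1 (hT hh)).2

lemma succ_pair_of_not_C {l j a b : Fin n} (hlj : l ≤ j) {T : Finset (Fin n)}
    (hT : T ⊆ Finset.Ioo l j)
    (hC : ¬ (j = a ∧ b ∈ insert l T ∧ ∀ x ∈ T, x ≤ b))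
    (hmp : memPairs a b (sortIns l j T)) :
    ∃ c, memPairs c a (sortIns l j T) ∧ a < c := by
  rcases eq_or_lt_of_le hlj with heq | hlt
  · exfalso
    subst heq
    have hTe : T = ∅ := by
      rw [Finset.eq_empty_iff_forall_notMem]
      intro x hx
      have := Finset.mem_Ioo.1 (hT hx)
      exact absurd (this.1.trans this.2) (lt_irrefl _)
    subst hTe
    rw [sortIns_self] at hmp
    exact hmp
  · by_cases haj : a = j
    · exfalso
      subst haj
      have hd := sortIns_append_gen hlt T (fun x hx => (Finset.mem_Ioo.1 (hT hx)).2)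
      set L := (insert l T).sort (· ≤ ·) with hLdef
      have hLne : L ≠ [] :=
        List.ne_nil_of_mem ((Finset.mem_sort _).2 (Finset.mem_insert_self l T))
      rw [hd] at hmp
      rcases (memPairs_append_last hLne).1 hmp with ⟨_, hb⟩ | hmp'
      · refine hC ⟨rfl, ?_, ?_⟩
        · rw [hb]
          exact (Finset.mem_sort _).1 (List.getLast_mem hLne)
        · intro x hx
          rw [hb]
          exact sorted_le_getLast hLne (Finset.pairwise_sort _ _)
            ((Finset.mem_sort _).2 (Finset.mem_insert_of_mem hx))
      · have : a ∈ L := memPairs_mem_left hmp'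
        rcases Finset.mem_insert.1 ((Finset.mem_sort _).1 this) with hh | hh
        · exact absurd hh (by intro h'; exact absurd (h' ▸ hlt) (lt_irrefl a))
        · exact absurd (Finset.mem_Ioo.1 (hT hh)).2 (lt_irrefl a)
    · have hgl := getLast_sortIns hlj hT (sortIns_ne_nil l j T)
      obtain ⟨c, hc⟩ := exists_succ_pair (sortIns_ne_nil l j T) hmp (by rw [hgl]; exact haj)
      exact ⟨c, hc, memPairs_lt (sortIns_sorted l j T) hc⟩

end AuxSort
section AuxAlg

set_option linter.unusedSectionVars false

variable {n : ℕ} {U : Type*} [Ring U] [Algebra ℂ U]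

lemma br_smul (c : ℂ) (x y : U) : br (c • x) y = c • br x y := by
  simp [br, smul_mul_assoc, mul_smul_comm, smul_sub]

lemma comm_E_Bp (d : OspData n U) (i j l : Fin n) :
    Eop d i j * d.B true l = d.B true l * Eop d i j + (if j = l then d.B true i else 0) := by
  have h2 : br (Eop d i j) (d.B true l) = (if j = l then d.B true i else 0) := by
    rw [Eop, br_smul, d.rel i j l true false true]
    simp only [sg, if_true, if_false]
    rw [smul_add, smul_smul, smul_smul]
    norm_num
  rw [br, sub_eq_iff_eq_add] at h2
  rw [h2, add_comm]

lemma comm_E_Bm (d : OspData n U) (i j l : Fin n) :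
    Eop d i j * d.B false l = d.B false l * Eop d i j - (if i = l then d.B false j else 0) := by
  have h2 : br (Eop d i j) (d.B false l) = -(if i = l then d.B false j else 0) := by
    rw [Eop, br_smul, d.rel i j l true false false]
    simp only [sg, if_true, if_false]
    rw [smul_add, smul_smul, smul_smul]
    norm_num
    split <;> simp
  rw [br, sub_eq_iff_eq_add] at h2
  rw [h2]
  abel

lemma comm_pow {e b c : U} (h : e * b = b * e + c) (hc : Commute e c) (m : ℕ) :
    b * e ^ m = e ^ m * b - (m : ℂ) • (e ^ (m - 1) * c) := by
  induction m with
  | zero => simp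
  | succ k ih =>
    have hb : b * e = e * b - c := (eq_sub_iff_add_eq).2 h.symm
    have hce : c * e ^ k = e ^ k * c := (hc.symm.pow_right k).eq
    calc b * e ^ (k+1) = (b * e) * e ^ k := by rw [pow_succ', ← mul_assoc]
      _ = e * (b * e ^ k) - e ^ k * c := by rw [hb, sub_mul, mul_assoc, hce]
      _ = e ^ (k+1) * b - ((k:ℂ) • (e * (e ^ (k-1) * c)) + e ^ k * c) := by
          rw [ih, mul_sub, ← mul_assoc, ← pow_succ', mul_smul_comm]; abel
      _ = e ^ (k+1) * b - ((k+1 : ℕ):ℂ) • (e ^ (k + 1 - 1) * c) := by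
          cases k with
          | zero => simp
          | succ k' =>
            rw [show k' + 1 - 1 = k' from rfl, show k' + 1 + 1 - 1 = k' + 1 from rfl,
              ← mul_assoc, ← pow_succ']
            have hcast : ((k' + 1 + 1 : ℕ) : ℂ) = ((k' + 1 : ℕ) : ℂ) + 1 := by push_cast; ring
            rw [hcast, add_smul, one_smul]

lemma list_prod_map_one {α : Type*} (l : List α) (f : α → U) (h : ∀ x ∈ l, f x = 1) :
    (l.map f).prod = 1 := by
  induction l with
  | nil => rfl
  | cons x r ih =>
    rw [List.map_cons, List.prod_cons, h x (List.mem_cons_self), one_mul,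
      ih (fun y hy => h y (List.mem_cons_of_mem _ hy))]

lemma prod_map_update {l : List (Fin n)} (f g : Fin n → U) (c : U) (b : Fin n)
    (hs : List.Pairwise (· < ·) l)
    (hfg : ∀ x ∈ l, x ≠ b → f x = g x)
    (hb : f b = g b * c)
    (htail : ∀ x ∈ l, b < x → g x = 1 ∧ f x = 1) :
    (l.map f).prod = (l.map g).prod * (if b ∈ l then c else 1) := by
  induction l with
  | nil => simp
  | cons x r ih =>
    have hxlt := (List.pairwise_cons.1 hs).1
    have hsr := (List.pairwise_cons.1 hs).2
    rw [List.map_cons, List.prod_cons, List.map_cons, List.prod_cons]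
    by_cases hxb : x = b
    · subst hxb
      have h1 : (r.map f).prod = 1 := list_prod_map_one _ _
        (fun y hy => (htail y (List.mem_cons_of_mem _ hy) (hxlt y hy)).2)
      have h2 : (r.map g).prod = 1 := list_prod_map_one _ _
        (fun y hy => (htail y (List.mem_cons_of_mem _ hy) (hxlt y hy)).1)
      rw [h1, h2, hb, if_pos (List.mem_cons_self), mul_one, mul_one]
    · have hmem : (b ∈ x :: r) ↔ (b ∈ r) :=
        ⟨fun hh => (List.mem_cons.1 hh).resolve_left (fun h' => hxb h'.symm),
         fun hh => List.mem_cons_of_mem _ hh⟩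
      rw [hfg x (List.mem_cons_self) hxb,
        ih hsr (fun y hy hyb => hfg y (List.mem_cons_of_mem _ hy) hyb)
          (fun y hy hby => htail y (List.mem_cons_of_mem _ hy) hby), ← mul_assoc]
      by_cases hbr : b ∈ r
      · rw [if_pos hbr, if_pos (hmem.2 hbr)]
      · rw [if_neg hbr, if_neg (fun hh => hbr (hmem.1 hh))]

lemma Epow_congr (d : OspData n U) {γ₁ γ₂ : Matrix (Fin n) (Fin n) ℕ}
    (h : ∀ k j : Fin n, j < k → γ₁ k j = γ₂ k j) :
    Epow d γ₁ = Epow d γ₂ := by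
  unfold Epow
  congr 1
  apply List.map_congr_left
  intro k _
  congr 1
  apply List.map_congr_left
  intro j _
  by_cases hjk : (j : ℕ) < (k : ℕ)
  · rw [if_pos hjk, if_pos hjk, h k j hjk]
  · rw [if_neg hjk, if_neg hjk]

lemma Epow_eq_one (d : OspData n U) {γ : Matrix (Fin n) (Fin n) ℕ}
    (h : ∀ k j : Fin n, j < k → γ k j = 0) : Epow d γ = 1 := by
  unfold Epow
  apply list_prod_map_one
  intro k _
  apply list_prod_map_one
  intro j _
  by_cases hjk : (j : ℕ) < (k : ℕ)
  · rw [if_pos hjk, h k j hjk, pow_zero]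
  · rw [if_neg hjk]

lemma Epow_peel (d : OspData n U) {γ : Matrix (Fin n) (Fin n) ℕ} {a b : Fin n} (hba : b < a)
    (htop : ∀ k j : Fin n, j < k → (a < k ∨ (a = k ∧ b < j)) → γ k j = 0) :
    Epow d (γ + Matrix.single a b 1) = Epow d γ * Eop d a b := by
  set γ' := γ + Matrix.single a b 1 with hγ'
  have hent : ∀ k j : Fin n, γ' k j = γ k j + (if a = k ∧ b = j then 1 else 0) := by
    intro k j
    rw [hγ', Matrix.add_apply, stdB_apply]
  have hrow : ∀ k : Fin n, k ≠ a →
      ((List.finRange n).map (fun j : Fin n =>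
        if (j : ℕ) < (k : ℕ) then (Eop d k j) ^ (γ' k j) else 1)).prod
      = ((List.finRange n).map (fun j : Fin n =>
        if (j : ℕ) < (k : ℕ) then (Eop d k j) ^ (γ k j) else 1)).prod := by
    intro k hk
    congr 1
    apply List.map_congr_left
    intro j _
    have hak : ¬ (a = k ∧ b = j) := fun hh => hk hh.1.symm
    have : γ' k j = γ k j := by rw [hent, if_neg hak, add_zero]
    rw [this]
  have hrowa :
      ((List.finRange n).map (fun j : Fin n =>
        if (j : ℕ) < (a : ℕ) then (Eop d a j) ^ (γ' a j) else 1)).prod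
      = ((List.finRange n).map (fun j : Fin n =>
        if (j : ℕ) < (a : ℕ) then (Eop d a j) ^ (γ a j) else 1)).prod * Eop d a b := by
    have := prod_map_update (l := List.finRange n)
      (fun j : Fin n => if (j : ℕ) < (a : ℕ) then (Eop d a j) ^ (γ' a j) else 1)
      (fun j : Fin n => if (j : ℕ) < (a : ℕ) then (Eop d a j) ^ (γ a j) else 1)
      (Eop d a b) b (List.pairwise_lt_finRange n)
      (fun x _ hxb => by
        have hbx : ¬ (a = a ∧ b = x) := fun hh => hxb hh.2.symm
        have : γ' a x = γ a x := by rw [hent, if_neg hbx, add_zero]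
        simp only [this])
      (by
        have hblt : (b : ℕ) < (a : ℕ) := hba
        have : γ' a b = γ a b + 1 := by rw [hent, if_pos ⟨rfl, rfl⟩]
        simp only [if_pos hblt, this, pow_succ])
      (fun x _ hbx => by
        by_cases hxa : (x : ℕ) < (a : ℕ)
        · have h0 : γ a x = 0 := htop a x hxa (Or.inr ⟨rfl, hbx⟩)
          have hne : ¬ (a = a ∧ b = x) := fun hh => absurd (hh.2 ▸ hbx) (lt_irrefl b)
          have h0' : γ' a x = 0 := by rw [hent, if_neg hne, add_zero, h0]
          constructor
          · simp only [if_pos hxa, h0, pow_zero]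
          · simp only [if_pos hxa, h0', pow_zero]
        · constructor <;> simp only [if_neg hxa])
    rw [this, if_pos (List.mem_finRange b)]
  have htail : ∀ k : Fin n, a < k →
      (((List.finRange n).map (fun j : Fin n =>
        if (j : ℕ) < (k : ℕ) then (Eop d k j) ^ (γ k j) else 1)).prod = 1
      ∧ ((List.finRange n).map (fun j : Fin n =>
        if (j : ℕ) < (k : ℕ) then (Eop d k j) ^ (γ' k j) else 1)).prod = 1) := by
    intro k hk
    constructor
    · apply list_prod_map_one
      intro j _
      by_cases hjk : (j : ℕ) < (k : ℕ)
      · rw [if_pos hjk, htop k j hjk (Or.inl hk), pow_zero]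
      · rw [if_neg hjk]
    · apply list_prod_map_one
      intro j _
      by_cases hjk : (j : ℕ) < (k : ℕ)
      · have hne : ¬ (a = k ∧ b = j) := fun hh => absurd (hh.1 ▸ hk) (lt_irrefl a)
        have h0 : γ' k j = 0 := by
          rw [hent, if_neg hne, add_zero, htop k j hjk (Or.inl hk)]
        rw [if_pos hjk, h0, pow_zero]
      · rw [if_neg hjk]
  have key := prod_map_update (l := List.finRange n)
    (fun k : Fin n => ((List.finRange n).map (fun j : Fin n =>
      if (j : ℕ) < (k : ℕ) then (Eop d k j) ^ (γ' k j) else 1)).prod)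
    (fun k : Fin n => ((List.finRange n).map (fun j : Fin n =>
      if (j : ℕ) < (k : ℕ) then (Eop d k j) ^ (γ k j) else 1)).prod)
    (Eop d a b) a (List.pairwise_lt_finRange n)
    (fun x _ hxa => hrow x hxa)
    hrowa
    (fun x _ hax => ⟨(htail x hax).1, (htail x hax).2⟩)
  show Epow d γ' = Epow d γ * Eop d a b
  unfold Epow
  rw [key, if_pos (List.mem_finRange a)]

lemma sum_split2 {ι : Type*} [DecidableEq ι] (s : Finset ι) {i₁ i₂ : ι} (h1 : i₁ ∈ s)
    (h2 : i₂ ∈ s) (hne : i₁ ≠ i₂) (f g : ι → U) (A : U)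
    (hfg : ∀ j ∈ s, j ≠ i₁ → j ≠ i₂ → f j = g j)
    (hA1 : f i₁ = g i₁ + A) (hA2 : f i₂ = g i₂ - A) :
    ∑ j ∈ s, f j = ∑ j ∈ s, g j := by
  have key : ∀ j ∈ s, f j = g j + ((if j = i₁ then A else 0) - (if j = i₂ then A else 0)) := by
    intro j hj
    by_cases hj1 : j = i₁
    · subst hj1
      rw [if_pos rfl, if_neg hne, hA1]
      abel
    · by_cases hj2 : j = i₂
      · subst hj2
        rw [if_neg hj1, if_pos rfl, hA2]
        abel
      · rw [if_neg hj1, if_neg hj2, hfg j hj hj1 hj2]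
        abel
  rw [Finset.sum_congr rfl key, Finset.sum_add_distrib, Finset.sum_sub_distrib,
    Finset.sum_ite_eq' s i₁ (fun _ => A), Finset.sum_ite_eq' s i₂ (fun _ => A),
    if_pos h1, if_pos h2]
  abel

end AuxAlg
section AuxMain

set_option linter.unusedSectionVars false
set_option maxHeartbeats 1000000

variable {n : ℕ} {U : Type*} [Ring U] [Algebra ℂ U]

/-- Sum of the strictly-lower-triangular entries. -/
def Nlow (γ : Matrix (Fin n) (Fin n) ℕ) : ℕ :=
  ∑ kj ∈ Finset.univ.filter (fun kj : Fin n × Fin n => kj.2 < kj.1), γ kj.1 kj.2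

lemma Nlow_lt {γ : Matrix (Fin n) (Fin n) ℕ} {a b : Fin n} (hba : b < a) (hpos : γ a b ≠ 0) :
    Nlow (γ - Matrix.single a b 1) < Nlow γ := by
  apply Finset.sum_lt_sum
  · intro kj _
    rw [Matrix.sub_apply]
    exact Nat.sub_le _ _
  · refine ⟨(a, b), Finset.mem_filter.2 ⟨Finset.mem_univ _, hba⟩, ?_⟩
    simp only [Matrix.sub_apply, stdB_apply, and_self, if_true]
    omega

lemma sub_add_cancel_mat {γ : Matrix (Fin n) (Fin n) ℕ} {a b : Fin n} (hpos : γ a b ≠ 0) :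
    (γ - Matrix.single a b 1) + Matrix.single a b 1 = γ := by
  ext k j
  rw [Matrix.add_apply, Matrix.sub_apply, stdB_apply]
  by_cases h : a = k ∧ b = j
  · obtain ⟨h1, h2⟩ := h
    subst h1; subst h2
    rw [if_pos ⟨rfl, rfl⟩]
    omega
  · rw [if_neg h]
    omega

lemma mat_helper1 {γ : Matrix (Fin n) (Fin n) ℕ} {a b l j : Fin n} (hpos : γ a b ≠ 0)
    (hne : ¬ (a = l ∧ b = j)) :
    (γ - Matrix.single a b 1 - Matrix.single l j 1) + Matrix.single a b 1
      = γ - Matrix.single l j 1 := by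
  ext k j'
  simp only [Matrix.sub_apply, Matrix.add_apply, stdB_apply]
  by_cases h1 : a = k ∧ b = j'
  · obtain ⟨ha, hb⟩ := h1
    subst ha; subst hb
    have h2 : ¬ (l = a ∧ j = b) := fun hh => hne ⟨hh.1.symm, hh.2.symm⟩
    rw [if_pos ⟨rfl, rfl⟩, if_neg h2]
    omega
  · rw [if_neg h1]
    omega

lemma exists_top {γ : Matrix (Fin n) (Fin n) ℕ} (h : ¬ ∀ k j : Fin n, j < k → γ k j = 0) :
    ∃ a b : Fin n, b < a ∧ γ a b ≠ 0 ∧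
      (∀ k j : Fin n, j < k → (a < k ∨ (a = k ∧ b < j)) → γ k j = 0) := by
  push_neg at h
  obtain ⟨k0, j0, hk0, hne0⟩ := h
  classical
  set s := Finset.univ.filter
    (fun kj : Fin n × Fin n => kj.2 < kj.1 ∧ γ kj.1 kj.2 ≠ 0) with hs
  have hsn : s.Nonempty := ⟨(k0, j0), by simp [hs, hk0, hne0]⟩
  obtain ⟨ab, habs, hmax⟩ :=
    Finset.exists_max_image s (fun kj : Fin n × Fin n => (kj.1 : ℕ) * n + (kj.2 : ℕ)) hsn
  obtain ⟨hba, hne⟩ := (Finset.mem_filter.1 habs).2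
  refine ⟨ab.1, ab.2, hba, hne, ?_⟩
  intro k j hjk hlex
  by_contra hne2
  have hmem : (k, j) ∈ s := Finset.mem_filter.2 ⟨Finset.mem_univ _, hjk, hne2⟩
  have hle := hmax (k, j) hmem
  simp only at hle
  have hkey : (ab.1 : ℕ) * n + (ab.2 : ℕ) < (k : ℕ) * n + (j : ℕ) := by
    rcases hlex with h1 | ⟨h1, h2⟩
    · have hk1 : (ab.1 : ℕ) + 1 ≤ (k : ℕ) := h1
      have h3 : ((ab.1 : ℕ) + 1) * n ≤ (k : ℕ) * n := Nat.mul_le_mul_right n hk1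
      have h4 : (ab.2 : ℕ) < n := ab.2.isLt
      have h5 : ((ab.1 : ℕ) + 1) * n = (ab.1 : ℕ) * n + n := by ring
      omega
    · have h1' : (ab.1 : ℕ) = (k : ℕ) := congrArg Fin.val h1
      have h2' : (ab.2 : ℕ) < (j : ℕ) := h2
      rw [h1']
      omega
  omega

lemma sum_split1 {ι : Type*} [DecidableEq ι] (s : Finset ι) {b : ι} (hb : b ∈ s)
    (f g : ι → U) (A : U)
    (hfg : ∀ j ∈ s, j ≠ b → f j = g j) (hA : f b = g b + A) :
    ∑ j ∈ s, f j = (∑ j ∈ s, g j) + A := by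
  have key : ∀ j ∈ s, f j = g j + (if j = b then A else 0) := by
    intro j hj
    by_cases hjb : j = b
    · subst hjb; rw [if_pos rfl, hA]
    · rw [if_neg hjb, hfg j hj hjb, add_zero]
  rw [Finset.sum_congr rfl key, Finset.sum_add_distrib,
    Finset.sum_ite_eq' s b (fun _ => A), if_pos hb]

lemma Bm_mul_Epow (d : OspData n U) (γ : Matrix (Fin n) (Fin n) ℕ) (l : Fin n) :
    d.B false l * Epow d γ = ∑ j ∈ Finset.Iic l,
      (if l = j then (1 : ℂ) else (γ l j : ℂ)) •
        (Epow d (γ - Matrix.single l j 1) * d.B false j) := by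
  suffices H : ∀ N (γ : Matrix (Fin n) (Fin n) ℕ), Nlow γ = N →
      ∀ l : Fin n, d.B false l * Epow d γ = ∑ j ∈ Finset.Iic l,
        (if l = j then (1 : ℂ) else (γ l j : ℂ)) •
          (Epow d (γ - Matrix.single l j 1) * d.B false j) from H (Nlow γ) γ rfl l
  intro N
  induction N using Nat.strong_induction_on with
  | _ N IH =>
    intro γ hN l
    by_cases hz : ∀ k j : Fin n, j < k → γ k j = 0
    · -- base case : Epow γ = 1 and only the j = l term survives
      have hdiag : Epow d (γ - Matrix.single l l 1) = Epow d γ := by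
        apply Epow_congr
        intro k j hjk
        rw [Matrix.sub_apply, stdB_apply,
          if_neg (show ¬ (l = k ∧ l = j) by rintro ⟨rfl, rfl⟩; exact lt_irrefl _ hjk), tsub_zero]
      have hsum : (∑ j ∈ Finset.Iic l,
          (if l = j then (1 : ℂ) else (γ l j : ℂ)) •
            (Epow d (γ - Matrix.single l j 1) * d.B false j))
          = Epow d γ * d.B false l := by
        rw [Finset.sum_eq_single l]
        · rw [if_pos rfl, hdiag, one_smul]
        · intro j hj hne
          rw [if_neg (fun hh => hne hh.symm), hz l j (lt_of_le_of_ne (Finset.mem_Iic.1 hj) hne)]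
          rw [Nat.cast_zero, zero_smul]
        · intro h; exact absurd (Finset.mem_Iic.2 le_rfl) h
      rw [hsum, Epow_eq_one d hz, mul_one, one_mul]
    · obtain ⟨a, b, hba, hpos, htop⟩ := exists_top hz
      have hγδ : γ = (γ - Matrix.single a b 1) + Matrix.single a b 1 :=
        (sub_add_cancel_mat hpos).symm
      set δ := γ - Matrix.single a b 1 with hδ
      have hδent : ∀ k j : Fin n, ¬ (a = k ∧ b = j) → δ k j = γ k j := by
        intro k j hh
        rw [hδ, Matrix.sub_apply, stdB_apply, if_neg hh, tsub_zero]
      have htopδ : ∀ k j : Fin n, j < k → (a < k ∨ (a = k ∧ b < j)) → δ k j = 0 := by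
        intro k j h1 h2
        rw [hδ, Matrix.sub_apply, htop k j h1 h2]
        exact Nat.zero_sub _
      have hpeel : Epow d γ = Epow d δ * Eop d a b := by
        conv_lhs => rw [hγδ]
        exact Epow_peel d hba htopδ
      have hNδ : Nlow δ < N := hN ▸ Nlow_lt hba hpos
      have hIH := IH (Nlow δ) hNδ δ rfl l
      have hterm : ∀ j ∈ Finset.Iic l,
          ((if l = j then (1 : ℂ) else (δ l j : ℂ)) •
            (Epow d (δ - Matrix.single l j 1) * d.B false j)) * Eop d a b
          = (if l = j then (1 : ℂ) else (δ l j : ℂ)) •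
              (Epow d ((δ - Matrix.single l j 1) + Matrix.single a b 1)
                * d.B false j)
            + (if a = j then ((if l = j then (1 : ℂ) else (δ l j : ℂ)) •
                (Epow d (δ - Matrix.single l j 1) * d.B false b)) else 0) := by
        intro j _
        have hcomm : d.B false j * Eop d a b
            = Eop d a b * d.B false j + (if a = j then d.B false b else 0) := by
          rw [comm_E_Bm d a b j]; abel
        have hpeel2 : Epow d (δ - Matrix.single l j 1) * Eop d a b
            = Epow d ((δ - Matrix.single l j 1) + Matrix.single a b 1) :=
          (Epow_peel d hba (fun k j' h1 h2 => by
            rw [Matrix.sub_apply, htopδ k j' h1 h2]; exact Nat.zero_sub _)).symm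
        rw [smul_mul_assoc, mul_assoc, hcomm, mul_add, ← mul_assoc, hpeel2, smul_add]
        congr 1
        by_cases haj : a = j
        · rw [if_pos haj, if_pos haj]
        · rw [if_neg haj, if_neg haj, mul_zero, smul_zero]
      rw [hpeel, ← mul_assoc, hIH, Finset.sum_mul, Finset.sum_congr rfl hterm,
        Finset.sum_add_distrib, Finset.sum_ite_eq (Finset.Iic l) a]
      by_cases hal : a = l
      · -- a = l : use sum_split1 at index b
        subst hal
        rw [if_pos (Finset.mem_Iic.2 le_rfl), if_pos (rfl : a = a), one_smul]
        have hdiag2 : Epow d (δ - Matrix.single a a 1) = Epow d δ := by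
          apply Epow_congr
          intro k j hjk
          rw [Matrix.sub_apply, stdB_apply,
            if_neg (show ¬ (a = k ∧ a = j) by rintro ⟨rfl, rfl⟩; exact lt_irrefl _ hjk), tsub_zero]
        rw [hdiag2]
        refine (sum_split1 (Finset.Iic a) (Finset.mem_Iic.2 (le_of_lt hba))
          (fun j => (if a = j then (1 : ℂ) else (γ a j : ℂ)) •
            (Epow d (γ - Matrix.single a j 1) * d.B false j))
          (fun j => (if a = j then (1 : ℂ) else (δ a j : ℂ)) •
            (Epow d ((δ - Matrix.single a j 1) + Matrix.single a b 1)
              * d.B false j))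
          (Epow d δ * d.B false b) ?_ ?_).symm
        · intro j hj hjb
          have hne : ¬ (a = a ∧ b = j) := fun hh => hjb hh.2.symm
          beta_reduce
          rw [mat_helper1 hpos hne]
          by_cases haj : a = j
          · rw [if_pos haj, if_pos haj]
          · rw [if_neg haj, if_neg haj, hδent a j hne]
        · have hne : ¬ (a = b) := fun hh => absurd (hh ▸ hba) (lt_irrefl b)
          beta_reduce
          rw [if_neg hne, if_neg hne]
          have hgb : γ a b = δ a b + 1 := by
            have := hδ ▸ (Matrix.sub_apply γ (Matrix.single a b 1) a b)
            rw [hδ, Matrix.sub_apply, stdB_apply, if_pos ⟨rfl, rfl⟩]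
            omega
          rw [← hδ]
          rcases Nat.eq_zero_or_pos (δ a b) with hz0 | hp0
          · rw [hgb, hz0]
            simp
          · have hcan : (δ - Matrix.single a b 1) + Matrix.single a b 1 = δ :=
              sub_add_cancel_mat hp0.ne'
            rw [hcan, hgb, Nat.cast_add, Nat.cast_one, add_smul, one_smul]
      · -- a ≠ l : the extra term vanishes and sums agree termwise
        have hextra : (if a ∈ Finset.Iic l then
            ((if l = a then (1 : ℂ) else (δ l a : ℂ)) •
              (Epow d (δ - Matrix.single l a 1) * d.B false b)) else 0) = 0 := by
          split
          · rename_i hmem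
            have hal' : a < l := lt_of_le_of_ne (Finset.mem_Iic.1 hmem) hal
            rw [if_neg (fun hh : l = a => hal (hh.symm)), htopδ l a hal' (Or.inl hal'),
              Nat.cast_zero, zero_smul]
          · rfl
        rw [hextra, add_zero]
        apply Finset.sum_congr rfl
        intro j hj
        have hnelj : ¬ (a = l ∧ b = j) := fun hh => hal hh.1
        have hmat : (δ - Matrix.single l j 1) + Matrix.single a b 1
            = γ - Matrix.single l j 1 := mat_helper1 hpos hnelj
        rw [hmat, hδent l j (fun hh => hal hh.1)]

end AuxMain
section AuxPlus

set_option linter.unusedSectionVars false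
set_option maxHeartbeats 2000000

variable {n : ℕ} {U : Type*} [Ring U] [Algebra ℂ U]

/-- The coefficient in the raising-operator straightening formula. -/
def coefC (δ : Matrix (Fin n) (Fin n) ℕ) (l j : Fin n) (T : Finset (Fin n)) : ℂ :=
  ((-1 : ℂ) ^ (T.card + if l = j then 0 else 1)) * (chainProd δ (sortIns l j T) : ℂ)

/-- The correction term produced by commuting past one factor `E_{ab}`. -/
def Fterm (d : OspData n U) (δ : Matrix (Fin n) (Fin n) ℕ) (l b a : Fin n)
    (T' : Finset (Fin n)) : U :=
  coefC δ l b T' • (Epow d (δ - eJmat (sortIns l b T')) * d.B true a)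

lemma mat_helper2 {γ : Matrix (Fin n) (Fin n) ℕ} {a b : Fin n} (hpos : γ a b ≠ 0)
    (E : Matrix (Fin n) (Fin n) ℕ) (hE : E a b = 0) :
    ((γ - Matrix.single a b 1) - E) + Matrix.single a b 1 = γ - E := by
  ext k j'
  simp only [Matrix.sub_apply, Matrix.add_apply, stdB_apply]
  by_cases h1 : a = k ∧ b = j'
  · obtain ⟨ha, hb⟩ := h1
    subst ha; subst hb
    rw [if_pos ⟨rfl, rfl⟩, hE]
    omega
  · rw [if_neg h1]
    omega

lemma mat_sub_zero (γ : Matrix (Fin n) (Fin n) ℕ) : γ - 0 = γ := by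
  ext k j'
  simp [Matrix.sub_apply]

lemma mat_helper3 (γ E : Matrix (Fin n) (Fin n) ℕ) (a b : Fin n) :
    γ - (Matrix.single a b 1 + E) = (γ - Matrix.single a b 1) - E := by
  ext k j'
  simp only [Matrix.sub_apply, Matrix.add_apply]
  omega

lemma Bp_mul_Epow (d : OspData n U) (γ : Matrix (Fin n) (Fin n) ℕ) (l : Fin n) :
    d.B true l * Epow d γ = ∑ j ∈ Finset.Ici l, ∑ T ∈ (Finset.Ioo l j).powerset,
      (((-1 : ℂ) ^ (T.card + (if l = j then 0 else 1))) * (chainProd γ (sortIns l j T) : ℂ)) •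
        (Epow d (γ - eJmat (sortIns l j T)) * d.B true j) := by
  suffices H : ∀ N (γ : Matrix (Fin n) (Fin n) ℕ), Nlow γ = N →
      ∀ l : Fin n, d.B true l * Epow d γ = ∑ j ∈ Finset.Ici l,
        ∑ T ∈ (Finset.Ioo l j).powerset,
          coefC γ l j T • (Epow d (γ - eJmat (sortIns l j T)) * d.B true j) from
    H (Nlow γ) γ rfl l
  intro N
  induction N using Nat.strong_induction_on with
  | _ N IH =>
  intro γ hN l
  by_cases hz : ∀ k j : Fin n, j < k → γ k j = 0
  · -- base case
    have hEone := Epow_eq_one d hz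
    rw [hEone, mul_one]
    symm
    rw [Finset.sum_eq_single l]
    · rw [Finset.Ioo_self, Finset.powerset_empty, Finset.sum_singleton, sortIns_self]
      have h2 : eJmat [l] = (0 : Matrix (Fin n) (Fin n) ℕ) := rfl
      have h1 : chainProd γ [l] = 1 := rfl
      rw [coefC, sortIns_self, h1, h2, mat_sub_zero, hEone, one_mul, if_pos rfl]
      simp
    · intro j hj hne
      have hlj : l < j := lt_of_le_of_ne (Finset.mem_Ici.1 hj) (fun hh => hne hh.symm)
      apply Finset.sum_eq_zero
      intro T hT
      obtain ⟨e, hp, helt⟩ := exists_pair_sortIns hlj (Finset.mem_powerset.1 hT)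
      rw [coefC, chainProd_eq_zero hp (hz j e helt), Nat.cast_zero, mul_zero, zero_smul]
    · intro h; exact absurd (Finset.mem_Ici.2 le_rfl) h
  · obtain ⟨a, b, hba, hpos, htop⟩ := exists_top hz
    have hγδ : γ = (γ - Matrix.single a b 1) + Matrix.single a b 1 :=
      (sub_add_cancel_mat hpos).symm
    set δ := γ - Matrix.single a b 1 with hδ
    have hδent : ∀ k j : Fin n, ¬ (a = k ∧ b = j) → δ k j = γ k j := by
      intro k j hh
      rw [hδ, Matrix.sub_apply, stdB_apply, if_neg hh, tsub_zero]
    have htopδ : ∀ k j : Fin n, j < k → (a < k ∨ (a = k ∧ b < j)) → δ k j = 0 := by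
      intro k j h1 h2
      rw [hδ, Matrix.sub_apply, htop k j h1 h2]
      exact Nat.zero_sub _
    have hpeel : Epow d γ = Epow d δ * Eop d a b := by
      conv_lhs => rw [hγδ]
      exact Epow_peel d hba htopδ
    have hNδ : Nlow δ < N := hN ▸ Nlow_lt hba hpos
    have hIH := IH (Nlow δ) hNδ δ rfl l
    -- commute the rightmost factor through each summand
    have hterm : ∀ j ∈ Finset.Ici l, ∀ T ∈ (Finset.Ioo l j).powerset,
        (coefC δ l j T • (Epow d (δ - eJmat (sortIns l j T)) * d.B true j)) * Eop d a b
        = coefC δ l j T •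
            (Epow d ((δ - eJmat (sortIns l j T)) + Matrix.single a b 1) * d.B true j)
          - coefC δ l j T •
            (Epow d (δ - eJmat (sortIns l j T)) * (if b = j then d.B true a else 0)) := by
      intro j _ T _
      have hcomm : d.B true j * Eop d a b
          = Eop d a b * d.B true j - (if b = j then d.B true a else 0) := by
        rw [comm_E_Bp d a b j]; abel
      have hpeel2 : Epow d (δ - eJmat (sortIns l j T)) * Eop d a b
          = Epow d ((δ - eJmat (sortIns l j T)) + Matrix.single a b 1) :=
        (Epow_peel d hba (fun k j' h1 h2 => by
          rw [Matrix.sub_apply, htopδ k j' h1 h2]; exact Nat.zero_sub _)).symm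
      rw [smul_mul_assoc, mul_assoc, hcomm, mul_sub, ← mul_assoc, hpeel2, smul_sub]
    have e1 : ∀ j ∈ Finset.Ici l,
        (∑ T ∈ (Finset.Ioo l j).powerset,
          coefC δ l j T • (Epow d (δ - eJmat (sortIns l j T)) * d.B true j)) * Eop d a b
        = (∑ T ∈ (Finset.Ioo l j).powerset, coefC δ l j T •
            (Epow d ((δ - eJmat (sortIns l j T)) + Matrix.single a b 1) * d.B true j))
          - ∑ T ∈ (Finset.Ioo l j).powerset, coefC δ l j T •
            (Epow d (δ - eJmat (sortIns l j T)) * (if b = j then d.B true a else 0)) := by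
      intro j hj
      rw [Finset.sum_mul, Finset.sum_congr rfl (fun T hT => hterm j hj T hT),
        Finset.sum_sub_distrib]
    rw [hpeel, ← mul_assoc, hIH, Finset.sum_mul, Finset.sum_congr rfl e1,
      Finset.sum_sub_distrib]
    -- identify the subtracted double sum with the `C`-condition sum
    have hh2 : ∀ j ∈ Finset.Ici l, ∀ T ∈ (Finset.Ioo l j).powerset,
        coefC δ l j T • (Epow d (δ - eJmat (sortIns l j T)) * (if b = j then d.B true a else 0))
        = (if b = j then coefC δ l j T •
            (Epow d (δ - eJmat (sortIns l j T)) * d.B true a) else 0) := by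
      intro j _ T _
      by_cases hbj : b = j
      · rw [if_pos hbj, if_pos hbj]
      · rw [if_neg hbj, if_neg hbj, mul_zero, smul_zero]
    have hH : (∑ j ∈ Finset.Ici l, ∑ T ∈ (Finset.Ioo l j).powerset,
          coefC δ l j T • (Epow d (δ - eJmat (sortIns l j T)) * (if b = j then d.B true a else 0)))
        = (if b ∈ Finset.Ici l then ∑ T ∈ (Finset.Ioo l b).powerset, Fterm d δ l b a T else 0) := by
      rw [Finset.sum_congr rfl (fun j hj =>
        Finset.sum_congr rfl (fun T hT => hh2 j hj T hT))]
      have inner : ∀ j ∈ Finset.Ici l,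
          (∑ T ∈ (Finset.Ioo l j).powerset, if b = j then coefC δ l j T •
            (Epow d (δ - eJmat (sortIns l j T)) * d.B true a) else 0)
          = (if b = j then ∑ T ∈ (Finset.Ioo l b).powerset, Fterm d δ l b a T else 0) := by
        intro j _
        by_cases hbj : b = j
        · subst hbj
          rw [if_pos rfl]
          exact Finset.sum_congr rfl (fun T _ => by rw [if_pos rfl]; rfl)
        · rw [if_neg hbj]
          exact Finset.sum_eq_zero (fun T _ => if_neg hbj)
      rw [Finset.sum_congr rfl inner, Finset.sum_ite_eq (Finset.Ici l) b]
    have hE : (∑ j ∈ Finset.Ici l, ∑ T ∈ (Finset.Ioo l j).powerset,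
          if (j = a ∧ b ∈ insert l T ∧ ∀ x ∈ T, x ≤ b) then Fterm d δ l b a (T.erase b) else 0)
        = (if a ∈ Finset.Ici l then ∑ T ∈ (Finset.Ioo l a).powerset,
            (if (b ∈ insert l T ∧ ∀ x ∈ T, x ≤ b) then Fterm d δ l b a (T.erase b) else 0)
          else 0) := by
      have inner : ∀ j ∈ Finset.Ici l,
          (∑ T ∈ (Finset.Ioo l j).powerset,
            if (j = a ∧ b ∈ insert l T ∧ ∀ x ∈ T, x ≤ b) then Fterm d δ l b a (T.erase b) else 0)
          = (if j = a then ∑ T ∈ (Finset.Ioo l a).powerset,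
              (if (b ∈ insert l T ∧ ∀ x ∈ T, x ≤ b) then Fterm d δ l b a (T.erase b) else 0)
            else 0) := by
        intro j _
        by_cases hja : j = a
        · subst hja
          rw [if_pos rfl]
          refine Finset.sum_congr rfl (fun T _ => ?_)
          by_cases hc : (b ∈ insert l T ∧ ∀ x ∈ T, x ≤ b)
          · rw [if_pos ⟨rfl, hc.1, hc.2⟩, if_pos hc]
          · rw [if_neg (fun hh => hc hh.2), if_neg hc]
        · rw [if_neg hja]
          exact Finset.sum_eq_zero (fun T _ => if_neg (fun hh => hja hh.1))
      rw [Finset.sum_congr rfl inner, Finset.sum_ite_eq' (Finset.Ici l) a]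
    have claimB : (∑ j ∈ Finset.Ici l, ∑ T ∈ (Finset.Ioo l j).powerset,
          if (j = a ∧ b ∈ insert l T ∧ ∀ x ∈ T, x ≤ b) then Fterm d δ l b a (T.erase b) else 0)
        = ∑ j ∈ Finset.Ici l, ∑ T ∈ (Finset.Ioo l j).powerset,
          coefC δ l j T •
            (Epow d (δ - eJmat (sortIns l j T)) * (if b = j then d.B true a else 0)) := by
      rw [hE, hH]
      rcases lt_trichotomy b l with hbl | hbl | hlb
      · -- b < l : both vanish
        have h1 : b ∉ Finset.Ici l := by
          rw [Finset.mem_Ici]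
          exact not_le.2 hbl
        rw [if_neg h1]
        by_cases ha : a ∈ Finset.Ici l
        · rw [if_pos ha]
          apply Finset.sum_eq_zero
          intro T hT
          apply if_neg
          rintro ⟨hmem, _⟩
          rcases Finset.mem_insert.1 hmem with h | h
          · exact absurd h (ne_of_lt hbl)
          · exact absurd (Finset.mem_Ioo.1 (Finset.mem_powerset.1 hT h)).1
              (not_lt.2 (le_of_lt hbl))
        · rw [if_neg ha]
      · -- b = l : only `T = ∅` survives on the left
        subst hbl
        rw [if_pos (Finset.mem_Ici.2 le_rfl),
          if_pos (Finset.mem_Ici.2 (le_of_lt hba))]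
        rw [Finset.Ioo_self, Finset.powerset_empty, Finset.sum_singleton]
        rw [Finset.sum_eq_single ∅]
        · rw [if_pos ⟨Finset.mem_insert_self _ _, fun x hx => absurd hx (Finset.notMem_empty x)⟩,
            Finset.erase_empty]
        · intro T hT hne
          apply if_neg
          rintro ⟨_, hle⟩
          obtain ⟨x, hx⟩ := Finset.nonempty_iff_ne_empty.2 hne
          exact absurd (hle x hx)
            (not_le.2 (Finset.mem_Ioo.1 (Finset.mem_powerset.1 hT hx)).1)
        · intro h
          exact absurd (Finset.empty_mem_powerset _) h
      · -- l < b : reindex by inserting/erasing `b`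
        rw [if_pos (Finset.mem_Ici.2 (le_of_lt (hlb.trans hba))),
          if_pos (Finset.mem_Ici.2 (le_of_lt hlb))]
        rw [← Finset.sum_filter]
        refine Finset.sum_nbij' (fun T => T.erase b) (fun T' => insert b T') ?_ ?_ ?_ ?_ ?_
        · intro T hT
          have h' := Finset.mem_filter.1 hT
          have hTsub : T ⊆ Finset.Ioo l a := Finset.mem_powerset.1 h'.1
          have hle := h'.2.2
          rw [Finset.mem_powerset]
          intro x hx
          obtain ⟨hxb, hxT⟩ := Finset.mem_erase.1 hx
          rw [Finset.mem_Ioo]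
          exact ⟨(Finset.mem_Ioo.1 (hTsub hxT)).1, lt_of_le_of_ne (hle x hxT) hxb⟩
        · intro T' hT'
          have hT'sub := Finset.mem_powerset.1 hT'
          rw [Finset.mem_filter]
          refine ⟨Finset.mem_powerset.2 ?_, Finset.mem_insert.2 (Or.inr (Finset.mem_insert_self _ _)), ?_⟩
          · intro x hx
            rcases Finset.mem_insert.1 hx with h | h
            · subst h
              exact Finset.mem_Ioo.2 ⟨hlb, hba⟩
            · exact Finset.Ioo_subset_Ioo_right (le_of_lt hba) (hT'sub h)
          · intro x hx
            rcases Finset.mem_insert.1 hx with h | h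
            · exact le_of_eq h
            · exact le_of_lt (Finset.mem_Ioo.1 (hT'sub h)).2
        · intro T hT
          have h' := Finset.mem_filter.1 hT
          have hbT : b ∈ T := by
            rcases Finset.mem_insert.1 h'.2.1 with h | h
            · exact absurd h.symm (ne_of_lt hlb)
            · exact h
          exact Finset.insert_erase hbT
        · intro T' hT'
          have hT'sub := Finset.mem_powerset.1 hT'
          have hbT' : b ∉ T' := fun hh => absurd (Finset.mem_Ioo.1 (hT'sub hh)).2 (lt_irrefl b)
          exact Finset.erase_insert hbT'
        · intro T _
          rfl
    rw [← claimB, ← Finset.sum_sub_distrib]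
    rw [Finset.sum_congr rfl (fun j hj => (Finset.sum_sub_distrib _ _).symm)]
    -- now prove the target sum equals the combined sum, termwise
    refine Finset.sum_congr rfl (fun j hj => Finset.sum_congr rfl (fun T hTmem => ?_))
    have hlj : l ≤ j := Finset.mem_Ici.1 hj
    have hT : T ⊆ Finset.Ioo l j := Finset.mem_powerset.1 hTmem
    by_cases hC : (j = a ∧ b ∈ insert l T ∧ ∀ x ∈ T, x ≤ b)
    case neg =>
      rw [if_neg hC, sub_zero]
      by_cases hmp : memPairs a b (sortIns l j T)
      · obtain ⟨c, hcp, hac⟩ := succ_pair_of_not_C hlj hT hC hmp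
        have hγ0 : γ c a = 0 := htop c a hac (Or.inl hac)
        have hδ0 : δ c a = 0 := htopδ c a hac (Or.inl hac)
        rw [coefC, coefC, chainProd_eq_zero hcp hγ0, chainProd_eq_zero hcp hδ0]
        simp
      · have hcp : chainProd γ (sortIns l j T) = chainProd δ (sortIns l j T) :=
          chainProd_congr γ δ _ (fun c e hce => by
            refine (hδent c e ?_).symm
            intro hh
            rw [hh.1, hh.2] at hmp
            exact hmp hce)
        have hej : eJmat (sortIns l j T) a b = 0 := eJmat_apply_of_not_memPairs hmp
        have hmat : (δ - eJmat (sortIns l j T)) + Matrix.single a b 1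
            = γ - eJmat (sortIns l j T) := by
          rw [hδ]
          exact mat_helper2 hpos _ hej
        rw [coefC, coefC, hcp, hmat]
    case pos =>
      obtain ⟨hja, hbmem, hble⟩ := hC
      rw [if_pos ⟨hja, hbmem, hble⟩, hja]
      rw [hja] at hT
      rcases Finset.mem_insert.1 hbmem with hbl | hbT
      · -- b = l, T = ∅, chain is [l, a]
        have hla : l < a := hbl ▸ hba
        have hTe : T = ∅ := by
          rw [Finset.eq_empty_iff_forall_notMem]
          intro x hx
          have h1 := (Finset.mem_Ioo.1 (hT hx)).1
          have h2 := hble x hx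
          rw [hbl] at h2
          exact absurd h2 (not_le.2 h1)
        subst hTe
        rw [Finset.erase_empty, ← hbl]
        have h2l : sortIns b a ∅ = [b, a] := sortIns_two hba
        have hsl : sortIns b b ∅ = [b] := sortIns_self b
        rw [Fterm, coefC, coefC, coefC, h2l, hsl]
        have hc1 : chainProd γ [b, a] = γ a b := by simp [chainProd]
        have hc2 : chainProd δ [b, a] = δ a b := by simp [chainProd]
        have hc3 : chainProd δ [b] = 1 := rfl
        have he1 : eJmat [b, a] = Matrix.single a b 1 := by
          show Matrix.single a b 1 + eJmat [a] = _
          show Matrix.single a b 1 + 0 = _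
          rw [add_zero]
        have he2 : eJmat [b] = (0 : Matrix (Fin n) (Fin n) ℕ) := rfl
        rw [hc1, hc2, hc3, he1, he2, mat_sub_zero]
        have hne_ba : ¬ (b = a) := ne_of_lt hba
        rw [if_neg hne_ba, if_pos rfl, ← hδ]
        have hgab : γ a b = δ a b + 1 := by
          rw [hδ, Matrix.sub_apply, stdB_apply, if_pos ⟨rfl, rfl⟩]
          omega
        rcases Nat.eq_zero_or_pos (δ a b) with h0 | hp
        · rw [hgab, h0]
          simp
        · rw [sub_add_cancel_mat hp.ne', hgab]
          push_cast
          have hsplit : ((-1 : ℂ) ^ (Finset.card (∅ : Finset (Fin n)) + 1) * ((δ a b : ℂ) + 1))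
              = ((-1 : ℂ) ^ (Finset.card (∅ : Finset (Fin n)) + 1) * (δ a b : ℂ))
                + (-(( -1 : ℂ) ^ (Finset.card (∅ : Finset (Fin n)) + 0) * 1)) := by
            ring
          rw [hsplit, add_smul]
          rw [neg_smul]
          abel
      · -- b ∈ T : the chain ends with the pair (a, b)
        have hlb : l < b := (Finset.mem_Ioo.1 (hT hbT)).1
        set T' := T.erase b with hT'def
        have hT'sub : T' ⊆ Finset.Ioo l b := by
          intro x hx
          obtain ⟨hxb, hxT⟩ := Finset.mem_erase.1 hx
          exact Finset.mem_Ioo.2 ⟨(Finset.mem_Ioo.1 (hT hxT)).1,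
            lt_of_le_of_ne (hble x hxT) hxb⟩
        have hTins : T = insert b T' := (Finset.insert_erase hbT).symm
        have hdecomp : sortIns l a T = sortIns l b T' ++ [a] := by
          rw [hTins]
          exact sortIns_decomp hlb hba hT'sub
        have hLne : sortIns l b T' ≠ [] := sortIns_ne_nil l b T'
        have hlast : (sortIns l b T').getLast hLne = b :=
          getLast_sortIns (le_of_lt hlb) hT'sub hLne
        have hcpγ : chainProd γ (sortIns l a T)
            = chainProd γ (sortIns l b T') * γ a b := by
          rw [hdecomp, chainProd_append γ a _ hLne, hlast]
        have hcpδ : chainProd δ (sortIns l a T)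
            = chainProd δ (sortIns l b T') * δ a b := by
          rw [hdecomp, chainProd_append δ a _ hLne, hlast]
        have hmembd : ∀ x ∈ sortIns l b T', x ≤ b := by
          intro x hx
          rcases mem_sortIns.1 hx with h | h | h
          · exact h ▸ le_of_lt hlb
          · exact le_of_eq h
          · exact le_of_lt (Finset.mem_Ioo.1 (hT'sub h)).2
        have hcpeq : chainProd γ (sortIns l b T') = chainProd δ (sortIns l b T') := by
          refine chainProd_congr γ δ _ (fun c e hce => ?_)
          refine (hδent c e ?_).symm
          intro hh
          have hcb : c ≤ b := hmembd c (memPairs_mem_left hce)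
          rw [← hh.1] at hcb
          exact absurd hcb (not_le.2 hba)
        have hejL : eJmat (sortIns l b T') a b = 0 := by
          apply eJmat_apply_of_not_memPairs
          intro hmp
          exact absurd (hmembd a (memPairs_mem_left hmp)) (not_le.2 hba)
        have hejdec : eJmat (sortIns l a T)
            = Matrix.single a b 1 + eJmat (sortIns l b T') := by
          rw [hdecomp, eJmat_append a _ hLne, hlast]
        have hcard : T.card = T'.card + 1 := by
          rw [hTins, Finset.card_insert_of_notMem
            (fun hh => absurd (Finset.mem_erase.1 hh).1 (not_not.2 rfl))]
        have hne_la : ¬ (l = a) := ne_of_lt (hlb.trans hba)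
        have hne_lb : ¬ (l = b) := ne_of_lt hlb
        rw [Fterm, coefC, coefC, coefC, hcpγ, hcpδ, hcpeq, hejdec, hcard,
          if_neg hne_la, if_neg hne_lb]
        have hmg : γ - (Matrix.single a b 1 + eJmat (sortIns l b T'))
            = δ - eJmat (sortIns l b T') := by
          rw [mat_helper3, ← hδ]
        rw [hmg]
        have hmg2 : δ - (Matrix.single a b 1 + eJmat (sortIns l b T'))
            = (δ - Matrix.single a b 1) - eJmat (sortIns l b T') :=
          mat_helper3 δ _ a b
        rw [hmg2]
        have hgab : γ a b = δ a b + 1 := by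
          rw [hδ, Matrix.sub_apply, stdB_apply, if_pos ⟨rfl, rfl⟩]
          omega
        rcases Nat.eq_zero_or_pos (δ a b) with h0 | hp
        · rw [hgab, h0]
          push_cast
          have hsgn : ((-1 : ℂ) ^ (T'.card + 1 + 1)) = (-1 : ℂ) ^ T'.card := by
            rw [pow_succ, pow_succ]
            ring
          rw [hsgn]
          have hsgn2 : ((-1 : ℂ) ^ (T'.card + 1)) = -((-1 : ℂ) ^ T'.card) := by
            rw [pow_succ]
            ring
          rw [hsgn2]
          simp
        · have hcanc : ((δ - Matrix.single a b 1) - eJmat (sortIns l b T'))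
              + Matrix.single a b 1 = δ - eJmat (sortIns l b T') :=
            mat_helper2 hp.ne' _ hejL
          rw [hcanc, hgab]
          push_cast
          have hsgn : ((-1 : ℂ) ^ (T'.card + 1 + 1)) = (-1 : ℂ) ^ T'.card := by
            rw [pow_succ, pow_succ]
            ring
          have hsgn2 : ((-1 : ℂ) ^ (T'.card + 1)) = -((-1 : ℂ) ^ T'.card) := by
            rw [pow_succ]
            ring
          rw [hsgn, hsgn2]
          have hsplit : ((-1 : ℂ) ^ T'.card * ((chainProd δ (sortIns l b T') : ℂ) * ((δ a b : ℂ) + 1)))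
              = ((-1 : ℂ) ^ T'.card * ((chainProd δ (sortIns l b T') : ℂ) * (δ a b : ℂ)))
                + (-(-((-1 : ℂ) ^ T'.card) * (chainProd δ (sortIns l b T') : ℂ))) := by
            ring
          rw [hsplit, add_smul, neg_smul]
          abel

end AuxPlus
end OspBasis

open OspBasis

theorem stmt15 {n : ℕ} (hn : 0 < n)
    {U : Type*} [Ring U] [Algebra ℂ U] (d : OspData n U)
    {M : Type*} [AddCommGroup M] [Module ℂ M] [Module U M] [IsScalarTower ℂ U M]
    [IsSimpleModule U M]
    (p : ℕ) (hp : 0 < p) (v0 : M) (hv0 : v0 ≠ 0)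
    (hgen : Submodule.span U {v0} = ⊤)
    (hann : ∀ j : Fin n, d.B false j • v0 = 0)
    (hwt : ∀ j : Fin n, Eop d j j • v0 = ((p : ℂ) / 2) • v0)
    (lam : Fin n → ℕ) (hlam : Antitone lam) (hlen : plen lam ≤ p)
    (γ : Matrix (Fin n) (Fin n) ℕ) (ell : Fin n) :
    (d.B true ell • (Epow d γ • OmegaLam d hn lam v0) =
      ∑ j ∈ Finset.Ici ell, ∑ T ∈ (Finset.Ioo ell j).powerset,
        (((-1 : ℂ) ^ (T.card + (if ell = j then 0 else 1))) *
            (chainProd γ (sortIns ell j T) : ℂ)) •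
          (Epow d (γ - eJmat (sortIns ell j T)) • (d.B true j • OmegaLam d hn lam v0)))
    ∧ (d.B false ell • (Epow d γ • OmegaLam d hn lam v0) =
      ∑ j ∈ Finset.Iic ell,
        (if ell = j then (1 : ℂ) else (γ ell j : ℂ)) •
          (Epow d (γ - Matrix.single ell j 1) •
            (d.B false j • OmegaLam d hn lam v0))) := by
  constructor
  · rw [← mul_smul, Bp_mul_Epow d γ ell, Finset.sum_smul]
    refine Finset.sum_congr rfl fun j _ => ?_
    rw [Finset.sum_smul]
    refine Finset.sum_congr rfl fun T _ => ?_
    simp only [mul_smul, smul_assoc]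
  · rw [← mul_smul, Bm_mul_Epow d γ ell, Finset.sum_smul]
    refine Finset.sum_congr rfl fun j _ => ?_
    simp only [mul_smul, smul_assoc]
end
end
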